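/- arXiv:2012.09926 — 2 statements merged into one kernel-verified Lean document; each statement's English description precedes it below -/
import Mathlib

section
/- For n ≥ 3, the join-irreducible partitions of n+1 that are not sons (under the map η choosing the unique join-irreducible son, with η(2,1,…,1) defined as the right son (2,2,1,…,1)) of join-irreducible partitions of n are exactly: the partition (2,1,1,…,1) of n+1, and the partitions (3,…,3,1,…,1) of n+1 with at least one 3 and at least one 1. -/
def IsPartition (n : ℕ) (a : ℕ → ℕ) : Prop :=
  (∀ i j, i ≤ j → a j ≤ a i) ∧ (∑ i ∈ Finset.range n, a i = n) ∧ (∀ i, n ≤ i → a i = 0)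

def Dom (a b : ℕ → ℕ) : Prop :=
  ∀ j, ∑ i ∈ Finset.range j, a i ≤ ∑ i ∈ Finset.range j, b i

def IsSupOf (n : ℕ) (a b c : ℕ → ℕ) : Prop :=
  IsPartition n c ∧ Dom a c ∧ Dom b c ∧
    ∀ d, IsPartition n d → Dom a d → Dom b d → Dom c d

def IsInfOf (n : ℕ) (a b c : ℕ → ℕ) : Prop :=
  IsPartition n c ∧ Dom c a ∧ Dom c b ∧
    ∀ d, IsPartition n d → Dom d a → Dom d b → Dom d c

/-- The minimum partition (1,1,…,1) of n. -/
def ones (n : ℕ) : ℕ → ℕ := fun i => if i < n then 1 else 0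

/-- A partition of n is join-irreducible in the dominance lattice: it is not
the minimum and whenever it is the join of two partitions it equals one of them. -/
def JoinIrr (n : ℕ) (a : ℕ → ℕ) : Prop :=
  IsPartition n a ∧ a ≠ ones n ∧
    ∀ b c, IsPartition n b → IsPartition n c → IsSupOf n b c a → a = b ∨ a = c
def downAt (i : ℕ) (a : ℕ → ℕ) : ℕ → ℕ := fun j => if j = i then a j + 1 else a j

/-- Remove one grain from the first column. -/
def dec1 (a : ℕ → ℕ) : ℕ → ℕ := fun i => if i = 0 then a 0 - 1 else a i

/-- Slippery plateau at the first column, of length l ≥ 1 (0-based entries):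
entries 0..l are equal and the height difference at position l is 1. -/
def SlipperyPlateau1 (a : ℕ → ℕ) (l : ℕ) : Prop :=
  1 ≤ l ∧ (∀ i ≤ l, a i = a 0) ∧ a l = a (l + 1) + 1

/-- Non-slippery plateau at the first column: a plateau of length ≥ 1 ending at a cliff. -/
def NonSlipperyPlateau1 (a : ℕ → ℕ) : Prop :=
  ∃ k, 1 ≤ k ∧ (∀ i ≤ k, a i = a 0) ∧ a (k + 1) + 2 ≤ a k

/-- Slippery step at the first column. -/
def SlipperyStep1 (a : ℕ → ℕ) : Prop := ∃ l, SlipperyPlateau1 (dec1 a) l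

/-- Non-slippery step at the first column. -/
def NonSlipperyStep1 (a : ℕ → ℕ) : Prop := NonSlipperyPlateau1 (dec1 a)

/-- b is a son of the partition a of n: either the left son α↓₁, or the right
son α↓₂ (for a step at 1), or α↓_{l+2} (for a slippery plateau of length l at 1). -/
def Son (n : ℕ) (a b : ℕ → ℕ) : Prop :=
  IsPartition n a ∧ IsPartition (n + 1) b ∧
    (b = downAt 0 a ∨
     ((SlipperyStep1 a ∨ NonSlipperyStep1 a) ∧ b = downAt 1 a) ∨
     (∃ l, SlipperyPlateau1 a l ∧ b = downAt (l + 1) a))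

/-- The partition (2,1,…,1) of n. -/
def twoOnes (n : ℕ) : ℕ → ℕ := fun i => if i = 0 then 2 else if i < n - 1 then 1 else 0
/-- The partition (2,2,1,…,1) of k. -/
def twoTwoOnes (k : ℕ) : ℕ → ℕ := fun i => if i < 2 then 2 else if i < k - 2 then 1 else 0

/-- The partition with m threes followed by l ones. -/
def threesOnes (m l : ℕ) : ℕ → ℕ := fun i => if i < m then 3 else if i < m + l then 1 else 0

namespace St11

/-- partial sums -/
abbrev S (a : ℕ → ℕ) (j : ℕ) : ℕ := ∑ i ∈ Finset.range j, a i

lemma S_succ (a : ℕ → ℕ) (j : ℕ) : S a (j+1) = S a j + a j := Finset.sum_range_succ a j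

lemma dom_iff {a b : ℕ → ℕ} : Dom a b ↔ ∀ j, S a j ≤ S b j := Iff.rfl

lemma S_const_on (a : ℕ → ℕ) (v A B : ℕ) (hAB : A ≤ B) (h : ∀ i, A ≤ i → i < B → a i = v) :
    S a B = S a A + (B - A) * v := by
  induction B, hAB using Nat.le_induction with
  | base => simp
  | succ B hB ih =>
    rw [S_succ, ih (fun i h1 h2 => h i h1 (by omega)), h B hB (by omega)]
    have : B + 1 - A = (B - A) + 1 := by omega
    rw [this, Nat.succ_mul]; ring

lemma S_eq_of_zero (a : ℕ → ℕ) (A j : ℕ) (hA : A ≤ j) (h : ∀ i, A ≤ i → a i = 0) :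
    S a j = S a A := by
  have := S_const_on a 0 A j hA (fun i h1 _ => h i h1)
  omega

lemma funext_of_S {x y : ℕ → ℕ} (h : ∀ j, S x j = S y j) : x = y := by
  funext i
  have h1 := h (i+1); have h2 := h i
  rw [S_succ, S_succ] at h1; omega

lemma S_congr {x y : ℕ → ℕ} (h : x = y) (j : ℕ) : S x j = S y j := by rw [h]

/-- the shape ((c+1)^p, c^q, 1^r) -/
def sg (c p q r : ℕ) : ℕ → ℕ := fun i =>
  if i < p then c+1 else if i < p + q then c else if i < p + q + r then 1 else 0

lemma sg_val1 {c p q r i : ℕ} (h : i < p) : sg c p q r i = c + 1 := by simp [sg, h]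
lemma sg_val2 {c p q r i : ℕ} (h1 : p ≤ i) (h2 : i < p + q) : sg c p q r i = c := by
  simp [sg, h2]; omega
lemma sg_val3 {c p q r i : ℕ} (h1 : p + q ≤ i) (h2 : i < p + q + r) : sg c p q r i = 1 := by
  have n1 : ¬ i < p := by omega
  have n2 : ¬ i < p + q := by omega
  simp [sg, n1, n2, h2]
lemma sg_val4 {c p q r i : ℕ} (h1 : p + q + r ≤ i) : sg c p q r i = 0 := by
  have n1 : ¬ i < p := by omega
  have n2 : ¬ i < p + q := by omega
  have n3 : ¬ i < p + q + r := by omega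
  simp [sg, n1, n2, n3]

lemma Ssg1 (c p q r : ℕ) {j : ℕ} (h : j ≤ p) : S (sg c p q r) j = (c+1) * j := by
  have := S_const_on (sg c p q r) (c+1) 0 j (by omega)
    (fun i h1 h2 => sg_val1 (by omega))
  simp only [Nat.sub_zero] at this
  rw [this]
  simp [Nat.mul_comm]

lemma Ssg2 (c p q r : ℕ) {j : ℕ} (h1 : p ≤ j) (h2 : j ≤ p + q) :
    S (sg c p q r) j = (c+1) * p + c * (j - p) := by
  have := S_const_on (sg c p q r) c p j h1 (fun i hi1 hi2 => sg_val2 hi1 (by omega))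
  rw [this, Ssg1 c p q r (le_refl p), Nat.mul_comm c (j-p)]

lemma Ssg3 (c p q r : ℕ) {j : ℕ} (h1 : p + q ≤ j) (h2 : j ≤ p + q + r) :
    S (sg c p q r) j = (c+1) * p + c * q + (j - (p+q)) := by
  have := S_const_on (sg c p q r) 1 (p+q) j h1 (fun i hi1 hi2 => sg_val3 hi1 (by omega))
  rw [this, Ssg2 c p q r (by omega) (le_refl _)]
  simp

lemma Ssg4 (c p q r : ℕ) {j : ℕ} (h1 : p + q + r ≤ j) :
    S (sg c p q r) j = (c+1) * p + c * q + r := by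
  have := S_eq_of_zero (sg c p q r) (p+q+r) j h1 (fun i hi => sg_val4 hi)
  rw [this, Ssg3 c p q r (by omega) (le_refl _)]
  simp

/-- move one grain from row i to row j -/
def mv (i j : ℕ) (b : ℕ → ℕ) : ℕ → ℕ := fun k =>
  if k = i then b i - 1 else if k = j then b j + 1 else b k

lemma mv_S {i j : ℕ} (b : ℕ → ℕ) (hij : i < j) (hb1 : 1 ≤ b i) (k : ℕ) :
    S (mv i j b) k + (if i < k ∧ k ≤ j then 1 else 0) = S b k := by
  induction k with
  | zero => simp [S]
  | succ k ih =>
    rw [S_succ, S_succ]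
    by_cases h1 : k = i
    · subst h1
      have e : mv k j b k = b k - 1 := by simp [mv]
      rw [e]
      have c1 : ¬ (k < k ∧ k ≤ j) := by omega
      have c2 : (k < k + 1 ∧ k + 1 ≤ j) := by omega
      rw [if_neg c1] at ih; rw [if_pos c2]; omega
    · by_cases h2 : k = j
      · subst h2
        have e : mv i k b k = b k + 1 := by simp [mv]; intro h; omega
        rw [e]
        have c1 : (i < k ∧ k ≤ k) := by omega
        have c2 : ¬ (i < k + 1 ∧ k + 1 ≤ k) := by omega
        rw [if_pos c1] at ih; rw [if_neg c2]; omega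
      · have e : mv i j b k = b k := by simp [mv, h1, h2]
        rw [e]
        have : (if i < k ∧ k ≤ j then 1 else 0) = (if i < k + 1 ∧ k + 1 ≤ j then 1 else 0) := by
          by_cases hc : i < k ∧ k ≤ j
          · rw [if_pos hc, if_pos (by omega)]
          · rw [if_neg hc, if_neg (by omega)]
        omega

lemma mono_of_adj (f : ℕ → ℕ) (h : ∀ k, f (k+1) ≤ f k) : ∀ i j, i ≤ j → f j ≤ f i := by
  intro i j hij
  induction j, hij using Nat.le_induction with
  | base => exact le_refl _
  | succ j hj ih => exact le_trans (h j) ih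

lemma mv_partition {N i j : ℕ} {b : ℕ → ℕ} (hb : IsPartition N b) (hij : i < j) (hjN : j < N)
    (hgap : b j + 2 ≤ b i) (hna : i + 1 ≠ j → b (i+1) + 1 ≤ b i ∧ b j + 1 ≤ b (j-1)) :
    IsPartition N (mv i j b) := by
  obtain ⟨hm, hs, hz⟩ := hb
  refine ⟨?_, ?_, ?_⟩
  · apply mono_of_adj
    intro k
    by_cases h1 : k = i
    · subst h1
      have e : mv k j b k = b k - 1 := by simp [mv]
      rw [e]
      by_cases h2 : k + 1 = j
      · have e2 : mv k j b (k+1) = b j + 1 := by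
          simp only [mv, if_neg (by omega : ¬ k+1 = k)]
          rw [if_pos h2]
        rw [e2]; omega
      · have e2 : mv k j b (k+1) = b (k+1) := by
          simp [mv, h2]
        rw [e2]; have := (hna (by omega)).1; omega
    · by_cases h2 : k = j
      · subst h2
        have e : mv i k b k = b k + 1 := by simp [mv]; intro h; omega
        have e2 : mv i k b (k+1) = b (k+1) := by simp [mv]; omega
        rw [e, e2]
        have := hm k (k+1) (by omega); omega
      · have e : mv i j b k = b k := by simp [mv, h1, h2]
        rw [e]
        by_cases h3 : k + 1 = i
        · have e2 : mv i j b (k+1) = b i - 1 := by simp [mv, h3]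
          rw [e2]; have := hm k i (by omega); omega
        · by_cases h4 : k + 1 = j
          · have e2 : mv i j b (k+1) = b j + 1 := by
              simp only [mv, if_neg h3]
              rw [if_pos h4]
            rw [e2]
            have hne : i + 1 ≠ j := by omega
            have := (hna hne).2
            have ej : j - 1 = k := by omega
            rw [ej] at this; omega
          · have e2 : mv i j b (k+1) = b (k+1) := by simp [mv, h3, h4]
            rw [e2]; exact hm k (k+1) (by omega)
  · have h' := mv_S b hij (by omega) N
    rw [if_neg (by omega)] at h'
    have h'' : S (mv i j b) N = S b N := by omega
    exact h''.trans hs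
  · intro k hk
    have h1 : k ≠ i := by omega
    have h2 : k ≠ j := by omega
    simp only [mv, if_neg h1, if_neg h2]
    exact hz k hk

lemma mv_S_eq {i j : ℕ} (b : ℕ → ℕ) (hij : i < j) (hb1 : 1 ≤ b i) {k : ℕ}
    (h : k ≤ i ∨ j < k) : S (mv i j b) k = S b k := by
  have := mv_S b hij hb1 k
  rw [if_neg (by omega)] at this; exact this

lemma mv_S_lt {i j : ℕ} (b : ℕ → ℕ) (hij : i < j) (hb1 : 1 ≤ b i) {k : ℕ}
    (h : i < k ∧ k ≤ j) : S (mv i j b) k + 1 = S b k := by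
  have := mv_S b hij hb1 k
  rw [if_pos h] at this; exact this

lemma part_S_N {N : ℕ} {b : ℕ → ℕ} (hb : IsPartition N b) {j : ℕ} (h : N ≤ j) : S b j = N := by
  rw [S_eq_of_zero b N j h (fun i hi => hb.2.2 i hi)]
  exact hb.2.1

lemma sup_of_cover {N : ℕ} {b x y : ℕ → ℕ} (hb : IsPartition N b) (hdx : Dom x b) (hdy : Dom y b)
    (hcov : ∀ j, S x j = S b j ∨ S y j = S b j) : IsSupOf N x y b := by
  refine ⟨hb, hdx, hdy, ?_⟩
  intro d hd hxd hyd j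
  show S b j ≤ S d j
  rcases hcov j with h | h
  · exact h ▸ hxd j
  · exact h ▸ hyd j

lemma sup_of_cover2 {N C : ℕ} {b x y : ℕ → ℕ} (hb : IsPartition N b)
    (hdx : Dom x b) (hdy : Dom y b)
    (hcov : ∀ j, j ≠ C → S x j = S b j ∨ S y j = S b j)
    (hC : 1 ≤ C)
    (h5 : S b C ≤ S x C + 1)
    (h3 : S y (C-1) = S b (C-1))
    (h4 : S x (C+1) = S b (C+1))
    (h6 : b (C-1) ≤ b C + 1) : IsSupOf N x y b := by
  refine ⟨hb, hdx, hdy, ?_⟩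
  intro d hd hxd hyd j
  show S b j ≤ S d j
  by_cases hj : j = C
  · subst hj
    by_contra hlt
    push_neg at hlt
    have hx1 : S x j ≤ S d j := hxd j
    have e1 : S d j + 1 = S b j := by omega
    have e2 : S b (j-1) ≤ S d (j-1) := h3 ▸ hyd (j-1)
    have hCC : j - 1 + 1 = j := by omega
    have eC : S d j = S d (j-1) + d (j-1) := by
      have := S_succ d (j-1); rw [hCC] at this; exact this
    have eCb : S b j = S b (j-1) + b (j-1) := by
      have := S_succ b (j-1); rw [hCC] at this; exact this
    have hd1 : d (j-1) + 1 ≤ b (j-1) := by omega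
    have hd2 : d j ≤ d (j-1) := hd.1 (j-1) j (by omega)
    have e3 : S d (j+1) = S d j + d j := S_succ d j
    have e4 : S b (j+1) = S b j + b j := S_succ b j
    have e5 : S b (j+1) ≤ S d (j+1) := h4 ▸ hxd (j+1)
    omega
  · rcases hcov j hj with h | h
    · exact h ▸ hxd j
    · exact h ▸ hyd j

lemma tailMove {N K : ℕ} {b : ℕ → ℕ} (hb : IsPartition N b) (h2 : 2 ≤ b K) :
    ∃ y, IsPartition N y ∧ Dom y b ∧ (∀ k, k ≤ K → S y k = S b k) ∧ (∃ k, S y k + 1 = S b k) := by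
  have hKN : K < N := by
    by_contra h
    have := hb.2.2 K (by omega); omega
  have hex : ∃ t, b (K+t+1) < b (K+t) := by
    by_contra h
    push_neg at h
    have hmono : ∀ t, 2 ≤ b (K+t) := by
      intro t
      induction t with
      | zero => simpa using h2
      | succ t ih =>
        show 2 ≤ b (K + t + 1)
        have := h t; omega
    have := hb.2.2 (K+N) (by omega)
    have := hmono N
    omega
  set t0 := Nat.find hex with ht0
  set i := K + t0 with hi
  have hdesc : b (i+1) < b i := Nat.find_spec hex
  have hplat : ∀ t, t ≤ t0 → b (K+t) = b K := by
    intro t ht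
    induction t with
    | zero => rfl
    | succ t ih =>
      have h1 := Nat.find_min hex (m := t) (by omega)
      have h2 := hb.1 (K+t) (K+t+1) (by omega)
      rw [ih (by omega)] at h1 h2
      show b (K + t + 1) = b K
      omega
  have hvi : b i = b K := hplat t0 (le_refl _)
  set v := b K with hv
  have hex2 : ∃ s, b (i+1+s) + 2 ≤ v := by
    refine ⟨N, ?_⟩
    have := hb.2.2 (i+1+N) (by omega)
    omega
  set s0 := Nat.find hex2 with hs0
  set j := i + 1 + s0 with hj
  have hbj : b j + 2 ≤ v := Nat.find_spec hex2
  have hmin : ∀ s, s < s0 → v ≤ b (i+1+s) + 1 := by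
    intro s hs
    have := Nat.find_min hex2 (m := s) hs
    omega
  have hij : i < j := by omega
  have hgap : b j + 2 ≤ b i := by rw [hvi]; exact hbj
  have hna : i + 1 ≠ j → b (i+1) + 1 ≤ b i ∧ b j + 1 ≤ b (j-1) := by
    intro hne
    constructor
    · omega
    · have hs1 : 1 ≤ s0 := by omega
      have := hmin (s0 - 1) (by omega)
      have e : i + 1 + (s0 - 1) = j - 1 := by omega
      rw [e] at this
      omega
  have hjm1 : 1 ≤ b (j-1) := by
    by_cases hadj : i + 1 = j
    · have e : j - 1 = i := by omega
      rw [e, hvi]; omega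
    · have := (hna hadj).2; omega
  have hjN : j < N := by
    by_contra h
    push_neg at h
    have hj1N : j - 1 < N := by
      by_contra h2
      have := hb.2.2 (j-1) (by omega); omega
    have hjeq : j = N := by omega
    have hall : ∀ k, k < N → 1 ≤ b k := by
      intro k hk
      have := hb.1 k (j-1) (by omega)
      omega
    have hlt : ∑ k ∈ Finset.range N, (fun _ => 1 : ℕ → ℕ) k < ∑ k ∈ Finset.range N, b k := by
      apply Finset.sum_lt_sum
      · intro k hk
        exact hall k (Finset.mem_range.1 hk)
      · exact ⟨K, Finset.mem_range.2 hKN, by omega⟩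
    simp at hlt
    have := hb.2.1
    omega
  have hb1 : 1 ≤ b i := by omega
  refine ⟨mv i j b, mv_partition hb hij hjN hgap hna, ?_, ?_, ?_⟩
  · intro k
    have := mv_S b hij hb1 k
    show S (mv i j b) k ≤ S b k
    omega
  · intro k hk
    exact mv_S_eq b hij hb1 (by omega)
  · exact ⟨i+1, mv_S_lt b hij hb1 (by omega)⟩

/-- shape predicate for join-irreducible partitions -/
def CShape (N c p q r : ℕ) (b : ℕ → ℕ) : Prop :=
  b = sg c p q r ∧ 1 ≤ c ∧ 1 ≤ q ∧ (1 ≤ r → 3 ≤ c) ∧ (c = 1 → 1 ≤ p ∧ r = 0) ∧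
    (c+1) * p + c * q + r = N

lemma sg_partition {N c p q r : ℕ} (hc : 1 ≤ c) (hN : (c+1) * p + c * q + r = N) :
    IsPartition N (sg c p q r) := by
  have hpqr : p + q + r ≤ N := by nlinarith
  refine ⟨?_, ?_, ?_⟩
  · apply mono_of_adj
    intro k
    by_cases a1 : k + 1 < p
    · rw [sg_val1 a1, sg_val1 (by omega)]
    · by_cases a2 : k + 1 < p + q
      · rw [sg_val2 (by omega) a2]
        by_cases a3 : k < p
        · rw [sg_val1 a3]; omega
        · rw [sg_val2 (by omega) (by omega)]
      · by_cases a4 : k + 1 < p + q + r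
        · rw [sg_val3 (by omega) a4]
          by_cases a3 : k < p
          · rw [sg_val1 a3]; omega
          · by_cases a5 : k < p + q
            · rw [sg_val2 (by omega) a5]; omega
            · rw [sg_val3 (by omega) (by omega)]
        · rw [sg_val4 (by omega)]
          omega
  · show S (sg c p q r) N = N
    rw [Ssg4 c p q r (by omega)]
    exact hN
  · intro k hk
    exact sg_val4 (by omega)

lemma CShape_partition {N c p q r : ℕ} {b : ℕ → ℕ} (h : CShape N c p q r b) :
    IsPartition N b := by
  rw [h.1]
  exact sg_partition h.2.1 h.2.2.2.2.2

lemma ones_eq (N : ℕ) : ones N = sg 0 0 0 N := by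
  funext i
  simp [ones, sg]

lemma S_ge_of (x : ℕ → ℕ) (v A B : ℕ) (hAB : A ≤ B) (h : ∀ i, A ≤ i → i < B → v ≤ x i) :
    S x A + (B - A) * v ≤ S x B := by
  induction B, hAB using Nat.le_induction with
  | base => simp
  | succ B hB ih =>
    rw [S_succ]
    have h1 := ih (fun i h1 h2 => h i h1 (by omega))
    have h2 := h B hB (by omega)
    have e : (B + 1 - A) * v = (B - A) * v + v := by
      have : B + 1 - A = (B - A) + 1 := by omega
      rw [this, Nat.succ_mul]
    omega

lemma S_one (x : ℕ → ℕ) : S x 1 = x 0 := by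
  show ∑ i ∈ Finset.range 1, x i = x 0
  exact Finset.sum_range_one (f := x)

/-- rigidity for shapes with c ≥ 2 : the only partition below b agreeing at p+q is b itself -/
lemma claimA {N c p q r : ℕ} (hc : 2 ≤ c) (hq : 1 ≤ q) (hr3 : 1 ≤ r → 3 ≤ c)
    (hN : (c+1) * p + c * q + r = N)
    {x : ℕ → ℕ} (hx : IsPartition N x) (hdx : Dom x (sg c p q r))
    (hK : S x (p+q) = S (sg c p q r) (p+q)) : x = sg c p q r := by
  set b := sg c p q r with hb
  set K := p + q with hKdef
  have SbK : S b K = (c+1)*p + c*q := by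
    rw [hb, Ssg2 c p q r (by omega) (by omega)]
    have : p + q - p = q := by omega
    rw [this]
  -- x p ≤ c
  have hxp : x p ≤ c := by
    rcases Nat.eq_zero_or_pos p with hp | hp
    · have h1 : S x 1 ≤ S b 1 := hdx 1
      rw [S_one, hb, Ssg2 c p q r (by omega) (by omega)] at h1
      simp [hp] at h1 ⊢
      omega
    · by_contra hpx
      push_neg at hpx
      have hmono : ∀ i, 0 ≤ i → i < p + 1 → c + 1 ≤ x i := by
        intro i _ hi
        have := hx.1 i p (by omega)
        omega
      have h1 := S_ge_of x (c+1) 0 (p+1) (by omega) hmono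
      simp at h1
      have h2 : S x (p+1) ≤ S b (p+1) := hdx (p+1)
      rw [hb, Ssg2 c p q r (by omega) (by omega)] at h2
      have e1 : (p + 1 - p) = 1 := by omega
      rw [e1] at h2
      have e2 : (p+1)*(c+1) = (c+1)*p + (c+1) := by ring
      omega
  -- x 0 ≤ b 0
  have hx0 : x 0 ≤ b 0 := by
    have h1 : S x 1 ≤ S b 1 := hdx 1
    rw [S_one] at h1
    have h2 : S b 1 = b 0 := S_one b
    omega
  -- pointwise below K
  have hple : ∀ i, i < K → x i ≤ b i := by
    intro i hi
    by_cases hip : i < p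
    · have h1 : b i = c + 1 := sg_val1 hip
      have h2 : b 0 = c + 1 := sg_val1 (by omega)
      have := hx.1 0 i (by omega)
      omega
    · have h1 : b i = c := sg_val2 (by omega) (by omega)
      have := hx.1 p i (by omega)
      omega
  -- equality below K
  have heqK : ∀ i ∈ Finset.range K, x i = b i := by
    rw [← Finset.sum_eq_sum_iff_of_le (fun i hi => hple i (Finset.mem_range.1 hi))]
    exact hK
  -- x K ≤ b K
  have hxK : x K ≤ b K := by
    have h1 : S x (K+1) ≤ S b (K+1) := hdx (K+1)
    have h2 : S x (K+1) = S x K + x K := S_succ x K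
    have h3 : S b (K+1) = S b K + b K := S_succ b K
    omega
  -- zeros beyond K + r
  have hzero : ∀ i, K + r ≤ i → x i = 0 := by
    by_contra h
    push_neg at h
    obtain ⟨i0, hi0, hxi0⟩ := h
    have hmono : ∀ i, K ≤ i → i < i0 + 1 → 1 ≤ x i := by
      intro i _ hi
      have := hx.1 i i0 (by omega)
      omega
    have h1 := S_ge_of x 1 K (i0+1) (by omega) hmono
    rw [Nat.mul_one] at h1
    have h2 : S x (i0+1) ≤ S b (i0+1) := hdx (i0+1)
    have h3 : S b (i0+1) = (c+1)*p + c*q + r := by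
      rw [hb]; exact Ssg4 c p q r (by omega)
    omega
  -- sums agree at K + r
  have hSKr : S x (K+r) = S b (K+r) := by
    have h1 : S x (K+r+N) = S x (K+r) := S_eq_of_zero x (K+r) (K+r+N) (by omega)
      (fun i hi => hzero i (by omega))
    have h2 : S x (K+r+N) = N := part_S_N hx (by omega)
    have h3 : S b (K+r) = (c+1)*p + c*q + r := by
      rw [hb]; exact Ssg4 c p q r (by omega)
    omega
  have hple2 : ∀ i ∈ Finset.range (K+r), x i ≤ b i := by
    intro i hi
    rcases Nat.lt_or_ge i K with h | h
    · exact hple i h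
    · have hiKr := Finset.mem_range.1 hi
      have h1 : b i = 1 := sg_val3 h (by omega)
      have h2 : b K = 1 := sg_val3 (le_refl _) (by omega)
      have h3 := hx.1 K i h
      omega
  have heqKr : ∀ i ∈ Finset.range (K+r), x i = b i := by
    rw [← Finset.sum_eq_sum_iff_of_le hple2]
    exact hSKr
  funext i
  rcases Nat.lt_or_ge i (K+r) with h | h
  · exact heqKr i (Finset.mem_range.2 h)
  · rw [hzero i h, hb, sg_val4 (by omega)]

/-- rigidity for shape (2^p, 1^q) : agreeing anywhere on [p, p+q] forces equality -/
lemma claimB {N p q : ℕ} (hp : 1 ≤ p) (hq : 1 ≤ q) (hN : 2 * p + 1 * q + 0 = N)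
    {x : ℕ → ℕ} (hx : IsPartition N x) (hdx : Dom x (sg 1 p q 0))
    {j0 : ℕ} (hj1 : p ≤ j0) (hj2 : j0 ≤ p + q)
    (hK : S x j0 = S (sg 1 p q 0) j0) : x = sg 1 p q 0 := by
  set b := sg 1 p q 0 with hb
  have SbJ : S b j0 = 2*p + (j0 - p) := by
    rw [hb, Ssg2 1 p q 0 (by omega) (by omega)]
    omega
  have hx0 : x 0 ≤ 2 := by
    have h1 : S x 1 ≤ S b 1 := hdx 1
    rw [S_one, hb, Ssg1 1 p q 0 (by omega)] at h1
    omega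
  have hple : ∀ i, i < j0 → x i ≤ b i := by
    intro i hi
    by_cases hip : i < p
    · have h1 : b i = 2 := sg_val1 hip
      have := hx.1 0 i (by omega)
      omega
    · have h1 : b i = 1 := sg_val2 (by omega) (by omega)
      by_contra hgt
      push_neg at hgt
      have hmono : ∀ k, 0 ≤ k → k < i + 1 → 2 ≤ x k := by
        intro k _ hk
        have h2 := hx.1 k i (by omega)
        have h3 := hx.1 0 k (by omega)
        omega
      have h4 := S_ge_of x 2 0 (i+1) (by omega) hmono
      simp at h4
      have h5 : S x (i+1) ≤ S b (i+1) := hdx (i+1)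
      rw [hb, Ssg2 1 p q 0 (by omega) (by omega)] at h5
      omega
  have heqJ : ∀ i ∈ Finset.range j0, x i = b i := by
    rw [← Finset.sum_eq_sum_iff_of_le (fun i hi => hple i (Finset.mem_range.1 hi))]
    exact hK
  have hxj0 : x j0 ≤ b j0 := by
    have h1 : S x (j0+1) ≤ S b (j0+1) := hdx (j0+1)
    have h2 : S x (j0+1) = S x j0 + x j0 := S_succ x j0
    have h3 : S b (j0+1) = S b j0 + b j0 := S_succ b j0
    omega
  have hzero : ∀ i, p + q ≤ i → x i = 0 := by
    by_contra h
    push_neg at h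
    obtain ⟨i0, hi0, hxi0⟩ := h
    have hmono : ∀ i, j0 ≤ i → i < i0 + 1 → 1 ≤ x i := by
      intro i _ hi
      have := hx.1 i i0 (by omega)
      omega
    have h1 := S_ge_of x 1 j0 (i0+1) (by omega) hmono
    rw [Nat.mul_one] at h1
    have h2 : S x (i0+1) ≤ S b (i0+1) := hdx (i0+1)
    have h3 : S b (i0+1) = 2*p + 1*q + 0 := by
      rw [hb]; exact Ssg4 1 p q 0 (by omega)
    omega
  have hSpq : S x (p+q) = S b (p+q) := by
    have h1 : S x (p+q+N) = S x (p+q) := S_eq_of_zero x (p+q) (p+q+N) (by omega)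
      (fun i hi => hzero i (by omega))
    have h2 : S x (p+q+N) = N := part_S_N hx (by omega)
    have h3 : S b (p+q) = 2*p + 1*q + 0 := by
      rw [hb]; exact Ssg4 1 p q 0 (by omega)
    omega
  have hple2 : ∀ i ∈ Finset.range (p+q), x i ≤ b i := by
    intro i hi
    rcases Nat.lt_or_ge i j0 with h | h
    · exact hple i h
    · have hiq : i < p + q := Finset.mem_range.1 hi
      have h1 : b i = 1 := sg_val2 (by omega) (by omega)
      have h2 : b j0 = 1 := sg_val2 (by omega) (by omega)
      have h3 := hx.1 j0 i h
      omega
  have heqKr : ∀ i ∈ Finset.range (p+q), x i = b i := by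
    rw [← Finset.sum_eq_sum_iff_of_le hple2]
    exact hSpq
  funext i
  rcases Nat.lt_or_ge i (p+q) with h | h
  · exact heqKr i (Finset.mem_range.2 h)
  · rw [hzero i h, hb, sg_val4 (by omega)]

lemma CShape_JI {N c p q r : ℕ} {b : ℕ → ℕ} (h : CShape N c p q r b) : JoinIrr N b := by
  obtain ⟨hbeq, hc, hq, hr3, hc1, hN⟩ := h
  subst hbeq
  have hpart := sg_partition hc hN
  have hcq : 1 ≤ c * q := Nat.one_le_iff_ne_zero.2 (by positivity)
  have hNpos : 1 ≤ N := by omega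
  refine ⟨hpart, ?_, ?_⟩
  · intro h
    have h0 := congrFun h 0
    have hb0 : 2 ≤ sg c p q r 0 := by
      rcases Nat.eq_zero_or_pos p with hp | hp
      · have : c ≠ 1 := fun hc1' => by have := (hc1 hc1').1; omega
        rw [sg_val2 (by omega) (by omega)]
        omega
      · rw [sg_val1 hp]; omega
    rw [h0] at hb0
    rw [show ones N 0 = 1 by simp [ones]; omega] at hb0
    omega
  · intro x y hx hy hsup
    by_contra hcon
    push_neg at hcon
    obtain ⟨hbx, hby⟩ := hcon
    obtain ⟨_, hdx, hdy, hleast⟩ := hsup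
    set K := p + q with hKdef
    by_cases hc2 : 2 ≤ c
    · -- unique cover is the cliff at K
      have hxK : S x K + 1 ≤ S (sg c p q r) K := by
        have h1 : S x K ≤ S (sg c p q r) K := hdx K
        have h2 : S x K ≠ S (sg c p q r) K := fun he =>
          hbx (claimA hc2 hq hr3 hN hx hdx he).symm
        omega
      have hyK : S y K + 1 ≤ S (sg c p q r) K := by
        have h1 : S y K ≤ S (sg c p q r) K := hdy K
        have h2 : S y K ≠ S (sg c p q r) K := fun he =>
          hby (claimA hc2 hq hr3 hN hy hdy he).symm
        omega
      have hKN : K < N := by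
        have h1 : 2*q ≤ c*q := Nat.mul_le_mul_right q hc2
        have h2 : p ≤ (c+1)*p := Nat.le_mul_of_pos_left p (by omega)
        omega
      have hbK : sg c p q r K ≤ c - 2 := by
        rcases Nat.eq_zero_or_pos r with hr | hr
        · rw [sg_val4 (by omega)]; omega
        · rw [sg_val3 (le_refl _) (by omega)]
          have := hr3 hr; omega
      have hbK1 : sg c p q r (K-1) = c := sg_val2 (by omega) (by omega)
      have hK1 : 1 ≤ K := by omega
      have hd := mv_partition (i := K-1) (j := K) hpart (by omega) hKN
        (by omega) (fun hne => absurd (by omega) hne)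
      have hb1 : 1 ≤ sg c p q r (K-1) := by omega
      have hdomx : Dom x (mv (K-1) K (sg c p q r)) := by
        intro k
        show S x k ≤ S (mv (K-1) K (sg c p q r)) k
        by_cases hk : k = K
        · subst hk
          have := mv_S_lt (i := K-1) (j := K) (sg c p q r) (by omega) hb1 (k := K) (by omega)
          omega
        · have := mv_S_eq (sg c p q r) (show K - 1 < K by omega) hb1 (k := k) (by omega)
          have h2 : S x k ≤ S (sg c p q r) k := hdx k
          omega
      have hdomy : Dom y (mv (K-1) K (sg c p q r)) := by
        intro k
        show S y k ≤ S (mv (K-1) K (sg c p q r)) k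
        by_cases hk : k = K
        · subst hk
          have := mv_S_lt (sg c p q r) (show K - 1 < K by omega) hb1 (k := K) (by omega)
          omega
        · have := mv_S_eq (sg c p q r) (show K - 1 < K by omega) hb1 (k := k) (by omega)
          have h2 : S y k ≤ S (sg c p q r) k := hdy k
          omega
      have hfin : S (sg c p q r) K ≤ S (mv (K-1) K (sg c p q r)) K := hleast _ hd hdomx hdomy K
      have := mv_S_lt (sg c p q r) (show K - 1 < K by omega) hb1 (k := K) (by omega)
      omega
    · -- c = 1 : shape (2^p, 1^q), deficit interval [p, K]
      have hc1' : c = 1 := by omega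
      subst hc1'
      obtain ⟨hp1, hr0⟩ := hc1 rfl
      subst hr0
      have hN' : 2 * p + 1 * q + 0 = N := by omega
      have hxI : ∀ j, p ≤ j → j ≤ K → S x j + 1 ≤ S (sg 1 p q 0) j := by
        intro j h1 h2
        have ha : S x j ≤ S (sg 1 p q 0) j := hdx j
        have hb2 : S x j ≠ S (sg 1 p q 0) j := fun he =>
          hbx (claimB hp1 hq hN' hx hdx h1 h2 he).symm
        omega
      have hyI : ∀ j, p ≤ j → j ≤ K → S y j + 1 ≤ S (sg 1 p q 0) j := by
        intro j h1 h2
        have ha : S y j ≤ S (sg 1 p q 0) j := hdy j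
        have hb2 : S y j ≠ S (sg 1 p q 0) j := fun he =>
          hby (claimB hp1 hq hN' hy hdy h1 h2 he).symm
        omega
      have hKN : K < N := by omega
      have hij : p - 1 < K := by omega
      have hbp1 : sg 1 p q 0 (p-1) = 2 := sg_val1 (by omega)
      have hbK : sg 1 p q 0 K = 0 := sg_val4 (by omega)
      have hd := mv_partition (i := p-1) (j := K) hpart hij hKN (by omega)
        (fun hne => by
          have h1 : sg 1 p q 0 (p-1+1) = 1 := by
            have e : p - 1 + 1 = p := by omega
            rw [e]; exact sg_val2 (le_refl _) (by omega)
          have h2 : sg 1 p q 0 (K-1) = 1 := by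
            have hq2 : p ≤ K - 1 := by omega
            exact sg_val2 hq2 (by omega)
          omega)
      have hb1 : 1 ≤ sg 1 p q 0 (p-1) := by omega
      have hdomx : Dom x (mv (p-1) K (sg 1 p q 0)) := by
        intro k
        show S x k ≤ S (mv (p-1) K (sg 1 p q 0)) k
        by_cases hk : p ≤ k ∧ k ≤ K
        · have := mv_S_lt (sg 1 p q 0) hij hb1 (k := k) (by omega)
          have h2 := hxI k hk.1 hk.2
          omega
        · have := mv_S_eq (sg 1 p q 0) hij hb1 (k := k) (by omega)
          have h2 : S x k ≤ S (sg 1 p q 0) k := hdx k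
          omega
      have hdomy : Dom y (mv (p-1) K (sg 1 p q 0)) := by
        intro k
        show S y k ≤ S (mv (p-1) K (sg 1 p q 0)) k
        by_cases hk : p ≤ k ∧ k ≤ K
        · have := mv_S_lt (sg 1 p q 0) hij hb1 (k := k) (by omega)
          have h2 := hyI k hk.1 hk.2
          omega
        · have := mv_S_eq (sg 1 p q 0) hij hb1 (k := k) (by omega)
          have h2 : S y k ≤ S (sg 1 p q 0) k := hdy k
          omega
      have hfin : S (sg 1 p q 0) K ≤ S (mv (p-1) K (sg 1 p q 0)) K := hleast _ hd hdomx hdomy K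
      have := mv_S_lt (sg 1 p q 0) hij hb1 (k := K) (by omega)
      omega

lemma ones_S {N j : ℕ} (h : j ≤ N) : S (ones N) j = j := by
  rw [ones_eq, Ssg3 0 0 0 N (by omega) (by omega)]
  simp

lemma S_zero (b : ℕ → ℕ) : S b 0 = 0 := by
  simp [S]

lemma classify {N : ℕ} {b : ℕ → ℕ} (hN : 1 ≤ N) (hJ : JoinIrr N b) :
    ∃ c p q r, CShape N c p q r b := by
  obtain ⟨hb, hone, hirr⟩ := hJ
  have hmono := hb.1
  have hSN : S b N = N := hb.2.1
  have hzN : ∀ i, N ≤ i → b i = 0 := hb.2.2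
  have hb0 : 1 ≤ b 0 := by
    by_contra h
    have h1 : S b N = S b 0 := S_eq_of_zero b 0 N (by omega)
      (fun i _ => by have := hmono 0 i (by omega); omega)
    have h2 := S_zero b
    omega
  have hb02 : 2 ≤ b 0 := by
    rcases Nat.lt_or_ge (b 0) 2 with h | h
    · exfalso
      have hb01 : b 0 = 1 := by omega
      have hle : ∀ i ∈ Finset.range N, b i ≤ ones N i := by
        intro i hi
        have h1 : ones N i = 1 := by simp [ones, Finset.mem_range.1 hi]
        have := hmono 0 i (by omega)
        omega
      have hsum : ∑ i ∈ Finset.range N, b i = ∑ i ∈ Finset.range N, ones N i := by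
        show S b N = S (ones N) N
        have := ones_S (le_refl N)
        omega
      have heq := (Finset.sum_eq_sum_iff_of_le hle).1 hsum
      apply hone
      funext i
      rcases Nat.lt_or_ge i N with h2 | h2
      · exact heq i (Finset.mem_range.2 h2)
      · rw [hzN i h2]
        have h3 : ¬ i < N := by omega
        simp [ones, h3]
    · exact h
  -- first plateau
  have hex1 : ∃ j, b j < b 0 := ⟨N, by have := hzN N (le_refl N); omega⟩
  set p := Nat.find hex1 with hpdef
  have hpv : b p < b 0 := Nat.find_spec hex1
  have hpl : ∀ i, i < p → b i = b 0 := by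
    intro i hi
    have h1 := Nat.find_min hex1 hi
    have h2 := hmono 0 i (by omega)
    omega
  have hp1 : 1 ≤ p := by
    rcases Nat.eq_zero_or_pos p with h | h
    · rw [h] at hpv; omega
    · exact h
  have e1 : S b p = p * b 0 := by
    have := S_const_on b (b 0) 0 p (by omega) (fun i _ h2 => hpl i h2)
    have h0 := S_zero b
    simp at this
    omega
  rcases Nat.eq_zero_or_pos (b p) with hv2z | hv2pos
  · -- shape (v1^p)
    refine ⟨b 0, 0, p, 0, ?_, by omega, hp1, by omega, fun h => absurd h (by omega), ?_⟩
    · funext i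
      rcases Nat.lt_or_ge i p with h | h
      · rw [hpl i h]
        exact (sg_val2 (by omega) (by omega)).symm
      · have h1 := hmono p i h
        rw [sg_val4 (by omega)]
        omega
    · have h2 : S b N = S b p := by
        rcases Nat.lt_or_ge p N with h | h
        · exact S_eq_of_zero b p N (by omega) (fun i hi => by have := hmono p i hi; omega)
        · have := S_eq_of_zero b N p h (fun i hi => hzN i hi)
          omega
      have h3 : (b 0 + 1) * 0 + b 0 * p + 0 = b 0 * p := by ring
      have h4 : b 0 * p = p * b 0 := Nat.mul_comm _ _
      omega
  · -- second plateau
    have hex2 : ∃ t, b (p + t) < b p := ⟨N, by have := hzN (p + N) (by omega); omega⟩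
    set q := Nat.find hex2 with hqdef
    have hqv : b (p + q) < b p := Nat.find_spec hex2
    have hql : ∀ i, p ≤ i → i < p + q → b i = b p := by
      intro i h1 h2
      have h3 := Nat.find_min hex2 (m := i - p) (by omega)
      have e : p + (i - p) = i := by omega
      rw [e] at h3
      have h4 := hmono p i h1
      omega
    have hq1 : 1 ≤ q := by
      rcases Nat.eq_zero_or_pos q with h | h
      · exfalso; rw [h] at hqv; simp at hqv
      · exact h
    have e2 : S b (p + q) = S b p + q * b p := by
      have := S_const_on b (b p) p (p + q) (by omega) (fun i h1 h2 => hql i h1 h2)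
      have e : p + q - p = q := by omega
      rw [e] at this
      omega
    rcases Nat.lt_or_ge (b 0) (b p + 2) with hg1 | hg2
    · -- g1 = 1
      have hg1' : b 0 = b p + 1 := by omega
      rcases Nat.eq_zero_or_pos (b (p + q)) with hv3z | hv3pos
      · -- shape ((c+1)^p, c^q)
        refine ⟨b p, p, q, 0, ?_, by omega, hq1, fun h => absurd h (by omega),
          fun _ => ⟨hp1, rfl⟩, ?_⟩
        · funext i
          rcases Nat.lt_or_ge i p with h | h
          · rw [hpl i h, sg_val1 h]; omega
          · rcases Nat.lt_or_ge i (p + q) with h2 | h2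
            · rw [hql i h h2]
              exact (sg_val2 h (by omega)).symm
            · have h1 := hmono (p+q) i h2
              rw [sg_val4 (by omega)]
              omega
        · have h2 : S b N = S b (p+q) := by
            rcases Nat.lt_or_ge (p+q) N with h | h
            · exact S_eq_of_zero b (p+q) N (by omega)
                (fun i hi => by have := hmono (p+q) i hi; omega)
            · have := S_eq_of_zero b N (p+q) h (fun i hi => hzN i hi)
              omega
          have h3 : (b p + 1) * p = p * (b p + 1) := Nat.mul_comm _ _
          have h4 : b p * q = q * b p := Nat.mul_comm _ _
          rw [hg1'] at e1
          omega
      · -- third plateau exists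
        have hex3 : ∃ t, b (p + q + t) < b (p + q) :=
          ⟨N, by have := hzN (p + q + N) (by omega); omega⟩
        set r := Nat.find hex3 with hrdef
        have hrv : b (p + q + r) < b (p + q) := Nat.find_spec hex3
        have hrl : ∀ i, p + q ≤ i → i < p + q + r → b i = b (p + q) := by
          intro i h1 h2
          have h3 := Nat.find_min hex3 (m := i - (p+q)) (by omega)
          have e : p + q + (i - (p+q)) = i := by omega
          rw [e] at h3
          have h4 := hmono (p+q) i h1
          omega
        have hr1 : 1 ≤ r := by
          rcases Nat.eq_zero_or_pos r with h | h
          · exfalso; rw [h] at hrv; simp at hrv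
          · exact h
        have e3 : S b (p + q + r) = S b (p + q) + r * b (p + q) := by
          have := S_const_on b (b (p+q)) (p+q) (p+q+r) (by omega)
            (fun i h1 h2 => hrl i h1 h2)
          have e : p + q + r - (p + q) = r := by omega
          rw [e] at this
          omega
        rcases Nat.lt_or_ge (b (p+q)) 2 with hv31 | hv32
        · -- v3 = 1
          have hv3e : b (p + q) = 1 := by omega
          rcases Nat.lt_or_ge (b p) 3 with hbp2 | hbp3
          · -- (3^p, 2^q, 1^r) : not join-irreducible, contradiction
            exfalso
            have hbpe : b p = 2 := by omega
            have hb0e : b 0 = 3 := by omega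
            have hv4 : b (p + q + r) = 0 := by omega
            -- N = 3p + 2q + r
            have h2 : S b N = S b (p+q+r) := by
              rcases Nat.lt_or_ge (p+q+r) N with h | h
              · exact S_eq_of_zero b (p+q+r) N (by omega)
                  (fun i hi => by have := hmono (p+q+r) i hi; omega)
              · have := S_eq_of_zero b N (p+q+r) h (fun i hi => hzN i hi)
                omega
            rw [hb0e] at e1
            rw [hbpe] at e2
            rw [hv3e] at e3
            have hNval : N = 3 * p + 2 * q + r := by
              have c1 : p * 3 = 3 * p := Nat.mul_comm _ _
              have c2 : q * 2 = 2 * q := Nat.mul_comm _ _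
              omega
            have hx1 : b (p-1) = 3 := by rw [hpl (p-1) (by omega)]; omega
            have hx2 : b (p+q-1) = 2 := by rw [hql (p+q-1) (by omega) (by omega)]; omega
            have hx3 : b (p+q+r-1) = 1 := by rw [hrl (p+q+r-1) (by omega) (by omega)]; omega
            have hijx : p - 1 < p + q := by omega
            have hijy : p + q - 1 < p + q + r := by omega
            have hxpart := mv_partition (i := p-1) (j := p+q) hb hijx (by omega)
              (by omega) (fun hne => by
                constructor
                · have e : p - 1 + 1 = p := by omega
                  rw [e]; omega
                · omega)
            have hypart := mv_partition (i := p+q-1) (j := p+q+r) hb hijy (by omega)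
              (by omega) (fun hne => by
                constructor
                · have : b (p+q-1+1) = 1 := by
                    have e : p + q - 1 + 1 = p + q := by omega
                    rw [e]; omega
                  omega
                · omega)
            have hbx1 : 1 ≤ b (p-1) := by omega
            have hby1 : 1 ≤ b (p+q-1) := by omega
            have hdx : Dom (mv (p-1) (p+q) b) b := by
              intro k
              show S (mv (p-1) (p+q) b) k ≤ S b k
              have := mv_S b hijx hbx1 k
              omega
            have hdy : Dom (mv (p+q-1) (p+q+r) b) b := by
              intro k
              show S (mv (p+q-1) (p+q+r) b) k ≤ S b k
              have := mv_S b hijy hby1 k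
              omega
            have hsup := sup_of_cover2 (N := N) (C := p+q) hb hdx hdy
              (fun j hj => by
                rcases Nat.lt_or_ge j p with h | h
                · left; exact mv_S_eq b hijx hbx1 (by omega)
                · rcases Nat.lt_or_ge j (p+q) with h2 | h2
                  · right; exact mv_S_eq b hijy hby1 (by omega)
                  · left; exact mv_S_eq b hijx hbx1 (by omega))
              (by omega)
              (by have := mv_S_lt b hijx hbx1 (k := p+q) (by omega); omega)
              (mv_S_eq b hijy hby1 (by omega))
              (mv_S_eq b hijx hbx1 (by omega))
              (by rw [hx2, hv3e])
            rcases hirr _ _ hxpart hypart hsup with he | he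
            · have h5 := S_congr he p
              have h6 := mv_S_lt b hijx hbx1 (k := p) (by omega)
              omega
            · have h5 := S_congr he (p+q)
              have h6 := mv_S_lt b hijy hby1 (k := p+q) (by omega)
              omega
          · -- shape ((c+1)^p, c^q, 1^r) with c ≥ 3
            have hv4 : b (p + q + r) = 0 := by omega
            refine ⟨b p, p, q, r, ?_, by omega, hq1, fun _ => hbp3,
              fun h => absurd h (by omega), ?_⟩
            · funext i
              rcases Nat.lt_or_ge i p with h | h
              · rw [hpl i h, sg_val1 h]; omega
              · rcases Nat.lt_or_ge i (p + q) with h2 | h2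
                · rw [hql i h h2]
                  exact (sg_val2 h (by omega)).symm
                · rcases Nat.lt_or_ge i (p + q + r) with h3 | h3
                  · rw [hrl i h2 h3, sg_val3 h2 h3]
                    omega
                  · have h1 := hmono (p+q+r) i h3
                    rw [sg_val4 (by omega)]
                    omega
            · have h2 : S b N = S b (p+q+r) := by
                rcases Nat.lt_or_ge (p+q+r) N with h | h
                · exact S_eq_of_zero b (p+q+r) N (by omega)
                    (fun i hi => by have := hmono (p+q+r) i hi; omega)
                · have := S_eq_of_zero b N (p+q+r) h (fun i hi => hzN i hi)
                  omega
              have h3 : (b p + 1) * p = p * (b p + 1) := Nat.mul_comm _ _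
              have h4 : b p * q = q * b p := Nat.mul_comm _ _
              rw [hg1'] at e1
              rw [hv3e] at e3
              omega
        · -- v3 ≥ 2 : contradiction, skip move + tail move
          exfalso
          have hpqN' : p + q < N := by
            by_contra h
            have := hzN (p+q) (by omega); omega
          have hx1 : b (p-1) = b 0 := hpl (p-1) (by omega)
          have hx2 : b (p+q-1) = b p := hql (p+q-1) (by omega) (by omega)
          have hijx : p - 1 < p + q := by omega
          have hxpart := mv_partition (i := p-1) (j := p+q) hb hijx hpqN'
            (by omega) (fun hne => by
              constructor
              · have : b (p-1+1) ≤ b p := by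
                  rcases Nat.lt_or_ge (p-1+1) p with h | h
                  · rw [hpl _ h]; omega
                  · exact hmono p (p-1+1) (by omega)
                omega
              · omega)
          have hbx1 : 1 ≤ b (p-1) := by omega
          have hdx : Dom (mv (p-1) (p+q) b) b := by
            intro k
            show S (mv (p-1) (p+q) b) k ≤ S b k
            have := mv_S b hijx hbx1 k
            omega
          obtain ⟨y, hypart, hdy, hyeq, k0, hk0⟩ := tailMove (K := p+q) hb hv32
          have hsup := sup_of_cover hb hdx hdy
            (fun j => by
              rcases Nat.lt_or_ge j p with h | h
              · left; exact mv_S_eq b hijx hbx1 (by omega)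
              · rcases Nat.lt_or_ge (p+q) j with h2 | h2
                · left; exact mv_S_eq b hijx hbx1 (by omega)
                · right; exact hyeq j (by omega))
          rcases hirr _ _ hxpart hypart hsup with he | he
          · have h5 := S_congr he p
            have h6 := mv_S_lt b hijx hbx1 (k := p) (by omega)
            omega
          · have h5 := S_congr he k0
            omega
    · -- g1 ≥ 2
      rcases Nat.lt_or_ge (b p) 2 with hv21 | hv22
      · -- v2 = 1 : shape (c^p, 1^q)
        have hv2e : b p = 1 := by omega
        have hv3 : b (p + q) = 0 := by omega
        refine ⟨b 0, 0, p, q, ?_, by omega, hp1, fun _ => by omega,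
          fun h => absurd h (by omega), ?_⟩
        · funext i
          rcases Nat.lt_or_ge i p with h | h
          · rw [hpl i h]
            exact (sg_val2 (by omega) (by omega)).symm
          · rcases Nat.lt_or_ge i (p + q) with h2 | h2
            · rw [hql i h h2, hv2e]
              exact (sg_val3 (by omega) (by omega)).symm
            · have h1 := hmono (p+q) i h2
              rw [sg_val4 (by omega)]
              omega
        · have h2 : S b N = S b (p+q) := by
            rcases Nat.lt_or_ge (p+q) N with h | h
            · exact S_eq_of_zero b (p+q) N (by omega)
                (fun i hi => by have := hmono (p+q) i hi; omega)
            · have := S_eq_of_zero b N (p+q) h (fun i hi => hzN i hi)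
              omega
          have h3 : (b 0 + 1) * 0 + b 0 * p + q = b 0 * p + q := by ring
          have h4 : b 0 * p = p * b 0 := Nat.mul_comm _ _
          rw [hv2e] at e2
          omega
      · -- v2 ≥ 2 : contradiction, cliff at p + tail move
        exfalso
        have hpN : p < N := by
          by_contra h
          have := hzN p (by omega); omega
        have hx1 : b (p-1) = b 0 := hpl (p-1) (by omega)
        have hijx : p - 1 < p := by omega
        have hxpart := mv_partition (i := p-1) (j := p) hb hijx hpN
          (by omega) (fun hne => absurd (by omega) hne)
        have hbx1 : 1 ≤ b (p-1) := by omega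
        have hdx : Dom (mv (p-1) p b) b := by
          intro k
          show S (mv (p-1) p b) k ≤ S b k
          have := mv_S b hijx hbx1 k
          omega
        obtain ⟨y, hypart, hdy, hyeq, k0, hk0⟩ := tailMove (K := p) hb hv22
        have hsup := sup_of_cover hb hdx hdy
          (fun j => by
            by_cases h : j = p
            · right; exact hyeq j (by omega)
            · left; exact mv_S_eq b hijx hbx1 (by omega))
        rcases hirr _ _ hxpart hypart hsup with he | he
        · have h5 := S_congr he p
          have h6 := mv_S_lt b hijx hbx1 (k := p) (by omega)
          omega
        · have h5 := S_congr he k0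
          omega

lemma twoOnes_eq {n : ℕ} (h : 2 ≤ n) : twoOnes n = sg 1 1 (n-2) 0 := by
  funext i
  by_cases h0 : i = 0
  · subst h0
    rw [show twoOnes n 0 = 2 by simp [twoOnes]]
    rw [sg_val1 (by omega)]
  · by_cases h1 : i < n - 1
    · rw [show twoOnes n i = 1 by simp [twoOnes, h0, h1]]
      rw [sg_val2 (by omega) (by omega)]
    · rw [show twoOnes n i = 0 by simp [twoOnes, h0, h1]]
      rw [sg_val4 (by omega)]

lemma twoTwoOnes_eq {N : ℕ} (h : 4 ≤ N) : twoTwoOnes N = sg 1 2 (N-4) 0 := by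
  funext i
  by_cases h0 : i < 2
  · rw [show twoTwoOnes N i = 2 by simp [twoTwoOnes, h0]]
    rw [sg_val1 (by omega)]
  · by_cases h1 : i < N - 2
    · rw [show twoTwoOnes N i = 1 by simp [twoTwoOnes, h0, h1]]
      rw [sg_val2 (by omega) (by omega)]
    · rw [show twoTwoOnes N i = 0 by simp [twoTwoOnes, h0, h1]]
      rw [sg_val4 (by omega)]

lemma threesOnes_eq (m l : ℕ) : threesOnes m l = sg 2 m 0 l := by
  funext i
  by_cases h0 : i < m
  · rw [show threesOnes m l i = 3 by simp [threesOnes, h0]]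
    rw [sg_val1 h0]
  · by_cases h1 : i < m + l
    · rw [show threesOnes m l i = 1 by simp [threesOnes, h0, h1]]
      rw [sg_val3 (by omega) (by omega)]
    · rw [show threesOnes m l i = 0 by simp [threesOnes, h0, h1]]
      rw [sg_val4 (by omega)]

lemma sg_p0 {c q r : ℕ} (hc : 1 ≤ c) : sg c 0 q r = sg (c-1) q 0 r := by
  funext i
  by_cases h0 : i < q
  · rw [sg_val2 (by omega) (by omega), sg_val1 h0]
    omega
  · by_cases h1 : i < q + r
    · rw [sg_val3 (p := 0) (by omega) (by omega), sg_val3 (p := q) (q := 0) (by omega) (by omega)]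
    · rw [sg_val4 (by omega), sg_val4 (by omega)]

lemma JI_twoOnes {n : ℕ} (hn : 3 ≤ n) : JoinIrr n (twoOnes n) :=
  CShape_JI (N := n) (c := 1) (p := 1) (q := n-2) (r := 0)
    ⟨twoOnes_eq (by omega), by omega, by omega, by omega, fun _ => ⟨by omega, rfl⟩, by omega⟩

/-- (3^m, 2, 1^l) is not join-irreducible -/
lemma notJI_32 {N m l : ℕ} (hm : 1 ≤ m) (hl : 1 ≤ l) (hN : 3 * m + 2 + l = N) :
    ¬ JoinIrr N (sg 2 m 1 l) := by
  intro hJ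
  have hpart : IsPartition N (sg 2 m 1 l) := sg_partition (by omega) (by omega)
  have v1 : ∀ i, i < m → sg 2 m 1 l i = 3 := fun i h => sg_val1 h
  have v2 : sg 2 m 1 l m = 2 := sg_val2 (le_refl _) (by omega)
  have v3 : ∀ i, m+1 ≤ i → i < m+1+l → sg 2 m 1 l i = 1 := fun i h1 h2 => sg_val3 h1 h2
  have v4 : ∀ i, m+1+l ≤ i → sg 2 m 1 l i = 0 := fun i h => sg_val4 h
  have hijx : m - 1 < m + 1 := by omega
  have hijy : m < m + 1 + l := by omega
  have hxpart := mv_partition (i := m-1) (j := m+1) hpart hijx (by omega)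
    (by rw [v3 (m+1) (le_refl _) (by omega), v1 (m-1) (by omega)])
    (fun hne => by
      constructor
      · have e : m - 1 + 1 = m := by omega
        rw [e, v2, v1 (m-1) (by omega)]
      · have e : m + 1 - 1 = m := by omega
        rw [e, v2, v3 (m+1) (le_refl _) (by omega)])
  have hypart := mv_partition (i := m) (j := m+1+l) hpart hijy (by omega)
    (by rw [v4 (m+1+l) (le_refl _), v2])
    (fun hne => by
      constructor
      · rw [v2, v3 (m+1) (le_refl _) (by omega)]
      · have e : m + 1 + l - 1 = m + l := by omega
        rw [e, v4 (m+1+l) (le_refl _), v3 (m+l) (by omega) (by omega)])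
  have hbx1 : 1 ≤ sg 2 m 1 l (m-1) := by rw [v1 (m-1) (by omega)]; omega
  have hby1 : 1 ≤ sg 2 m 1 l m := by omega
  have hdx : Dom (mv (m-1) (m+1) (sg 2 m 1 l)) (sg 2 m 1 l) := by
    intro k
    show S (mv (m-1) (m+1) (sg 2 m 1 l)) k ≤ S (sg 2 m 1 l) k
    have := mv_S (sg 2 m 1 l) hijx hbx1 k
    omega
  have hdy : Dom (mv m (m+1+l) (sg 2 m 1 l)) (sg 2 m 1 l) := by
    intro k
    show S (mv m (m+1+l) (sg 2 m 1 l)) k ≤ S (sg 2 m 1 l) k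
    have := mv_S (sg 2 m 1 l) hijy hby1 k
    omega
  have hsup := sup_of_cover2 (N := N) (C := m+1) hpart hdx hdy
    (fun j hj => by
      rcases Nat.lt_or_ge j m with h | h
      · left; exact mv_S_eq (sg 2 m 1 l) hijx hbx1 (by omega)
      · rcases Nat.lt_or_ge (m+1) j with h2 | h2
        · left; exact mv_S_eq (sg 2 m 1 l) hijx hbx1 (by omega)
        · right; exact mv_S_eq (sg 2 m 1 l) hijy hby1 (by omega))
    (by omega)
    (by have := mv_S_lt (sg 2 m 1 l) hijx hbx1 (k := m+1) (by omega); omega)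
    (by
      have e : m + 1 - 1 = m := by omega
      rw [e]
      exact mv_S_eq (sg 2 m 1 l) hijy hby1 (by omega))
    (mv_S_eq (sg 2 m 1 l) hijx hbx1 (by omega))
    (by
      have e : m + 1 - 1 = m := by omega
      rw [e, v2, v3 (m+1) (le_refl _) (by omega)])
  rcases hJ.2.2 _ _ hxpart hypart hsup with he | he
  · have h5 := S_congr he m
    have h6 := mv_S_lt (sg 2 m 1 l) hijx hbx1 (k := m) (by omega)
    omega
  · have h5 := S_congr he (m+1)
    have h6 := mv_S_lt (sg 2 m 1 l) hijy hby1 (k := m+1) (by omega)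
    omega

lemma twoOnes_0 (n : ℕ) : twoOnes n 0 = 2 := by simp [twoOnes]

lemma twoOnes_1 {n : ℕ} (hn : 3 ≤ n) : twoOnes n 1 = 1 := by
  simp only [twoOnes, if_neg one_ne_zero]
  rw [if_pos (by omega : 1 < n - 1)]

/-- parent construction when b = (c^q, 1^r) (i.e. p = 0) -/
lemma build_p0 {n c q r : ℕ} (hn : 3 ≤ n) (hc : 2 ≤ c) (hq : 1 ≤ q)
    (hr4 : 1 ≤ r → 4 ≤ c) (hq3 : c = 2 → 3 ≤ q) (hNs : c * q + r = n + 1) :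
    JoinIrr n (sg (c-1) (q-1) 1 r) ∧ Son n (sg (c-1) (q-1) 1 r) (sg c 0 q r) ∧
      sg (c-1) (q-1) 1 r ≠ twoOnes n := by
  obtain ⟨q', rfl⟩ : ∃ q', q = q' + 1 := ⟨q - 1, by omega⟩
  obtain ⟨c', rfl⟩ : ∃ c', c = c' + 1 := ⟨c - 1, by omega⟩
  simp only [Nat.add_sub_cancel]
  have hring1 : (c'+1)*(q'+1) = (c'+1)*q' + (c'+1) := by ring
  have hsh : CShape n c' q' 1 r (sg c' q' 1 r) := by
    refine ⟨rfl, by omega, le_refl _, fun h => by have := hr4 h; omega,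
      fun h => ⟨?_, ?_⟩, by omega⟩
    · have := hq3 (by omega); omega
    · by_contra hr
      have := hr4 (by omega); omega
  have hpa := CShape_partition hsh
  have hpb : IsPartition (n+1) (sg (c'+1) 0 (q'+1) r) := sg_partition (by omega) (by omega)
  have heq : sg (c'+1) 0 (q'+1) r = downAt q' (sg c' q' 1 r) := by
    funext i
    simp only [downAt]
    by_cases h0 : i = q'
    · subst h0
      rw [if_pos rfl, sg_val2 (p := 0) (by omega) (by omega),
        sg_val2 (le_refl _) (by omega)]
    · rw [if_neg h0]
      rcases Nat.lt_or_ge i q' with h | h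
      · rw [sg_val2 (p := 0) (by omega) (by omega), sg_val1 h]
      · rcases Nat.lt_or_ge i (q' + 1 + r) with h2 | h2
        · rw [sg_val3 (p := 0) (by omega) (by omega), sg_val3 (by omega) (by omega)]
        · rw [sg_val4 (by omega), sg_val4 (by omega)]
  refine ⟨CShape_JI hsh, ⟨hpa, hpb, ?_⟩, ?_⟩
  · rcases Nat.eq_zero_or_pos q' with h0 | hq'1
    · subst h0
      exact Or.inl heq
    · by_cases hq'2 : 2 ≤ q'
      · refine Or.inr (Or.inr ⟨q'-1, ⟨by omega, ?_, ?_⟩, ?_⟩)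
        · intro i hi
          rw [sg_val1 (by omega), sg_val1 (by omega)]
        · rw [sg_val1 (by omega)]
          have e : q' - 1 + 1 = q' := by omega
          rw [e, sg_val2 (le_refl _) (by omega)]
        · have e : q' - 1 + 1 = q' := by omega
          rw [e]
          exact heq
      · -- q' = 1 : step at the first column
        have hq'e : q' = 1 := by omega
        subst hq'e
        have hc'2 : 2 ≤ c' := by
          by_contra hcc
          have := hq3 (by omega)
          omega
        have dpos : ∀ i, 1 ≤ i → dec1 (sg c' 1 1 r) i = sg c' 1 1 r i := by
          intro i hi
          show (if i = 0 then sg c' 1 1 r 0 - 1 else sg c' 1 1 r i) = _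
          rw [if_neg (by omega : ¬ i = 0)]
        have d0 : dec1 (sg c' 1 1 r) 0 = c' := by
          show (if (0:ℕ) = 0 then sg c' 1 1 r 0 - 1 else sg c' 1 1 r 0) = c'
          rw [if_pos rfl, sg_val1 (by omega)]
          omega
        refine Or.inr (Or.inl ⟨Or.inr ⟨1, le_refl _, ?_, ?_⟩, heq⟩)
        · intro i hi
          rcases Nat.eq_zero_or_pos i with h0 | h0
          · subst h0; rfl
          · have hi1 : i = 1 := by omega
            subst hi1
            rw [dpos 1 (by omega), d0]
            exact sg_val2 (le_refl _) (by omega)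
        · have w1 : dec1 (sg c' 1 1 r) 1 = c' := by
            rw [dpos 1 (by omega)]
            exact sg_val2 (le_refl _) (by omega)
          have w2 : dec1 (sg c' 1 1 r) (1+1) = sg c' 1 1 r (1+1) := dpos (1+1) (by omega)
          rcases Nat.eq_zero_or_pos r with hr | hr
          · have w3 : sg c' 1 1 r (1+1) = 0 := sg_val4 (by omega)
            omega
          · have w3 : sg c' 1 1 r (1+1) = 1 := sg_val3 (by omega) (by omega)
            have := hr4 hr
            omega
  · intro h
    have h1 := congrFun h 1
    rcases Nat.eq_zero_or_pos q' with hq0 | hq1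
    · subst hq0
      have hr0 : r = 0 := by
        by_contra hr
        have h4 := hr4 (by omega)
        have h0 := congrFun h 0
        rw [sg_val2 (le_refl _) (by omega), twoOnes_0] at h0
        omega
      subst hr0
      rw [sg_val4 (by omega), twoOnes_1 hn] at h1
      omega
    · by_cases hq'1 : 1 < q'
      · rw [sg_val1 hq'1, twoOnes_1 hn] at h1
        omega
      · have hq'e : q' = 1 := by omega
        subst hq'e
        have hc'2 : 2 ≤ c' := by
          by_contra hcc
          have := hq3 (by omega)
          omega
        rw [sg_val2 (le_refl _) (by omega), twoOnes_1 hn] at h1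
        omega

/-- parent construction when b = ((c+1)^p, c^q, 1^r) with p ≥ 1 -/
lemma build_p1 {n c p q r : ℕ} (hn : 3 ≤ n) (hc : 1 ≤ c) (hp : 1 ≤ p) (hq : 1 ≤ q)
    (hr3 : 1 ≤ r → 3 ≤ c) (hc1 : c = 1 → r = 0 ∧ 3 ≤ p)
    (hNs : (c+1) * p + c * q + r = n + 1) :
    JoinIrr n (sg c (p-1) (q+1) r) ∧ Son n (sg c (p-1) (q+1) r) (sg c p q r) ∧
      sg c (p-1) (q+1) r ≠ twoOnes n := by
  obtain ⟨p', rfl⟩ : ∃ p', p = p' + 1 := ⟨p - 1, by omega⟩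
  simp only [Nat.add_sub_cancel]
  have hring1 : (c+1)*(p'+1) = (c+1)*p' + (c+1) := by ring
  have hring2 : c*(q+1) = c*q + c := by ring
  have hsh : CShape n c p' (q+1) r (sg c p' (q+1) r) :=
    ⟨rfl, hc, by omega, hr3, fun h => ⟨by have := (hc1 h).2; omega, (hc1 h).1⟩, by omega⟩
  have hpa := CShape_partition hsh
  have hpb : IsPartition (n+1) (sg c (p'+1) q r) := sg_partition hc (by omega)
  have heq : sg c (p'+1) q r = downAt p' (sg c p' (q+1) r) := by
    funext i
    simp only [downAt]
    by_cases h0 : i = p'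
    · subst h0
      rw [if_pos rfl, sg_val1 (by omega), sg_val2 (le_refl _) (by omega)]
    · rw [if_neg h0]
      rcases Nat.lt_or_ge i p' with h | h
      · rw [sg_val1 (by omega), sg_val1 h]
      · rcases Nat.lt_or_ge i (p' + 1 + q) with h2 | h2
        · rw [sg_val2 (by omega) h2, sg_val2 (by omega) (by omega)]
        · rcases Nat.lt_or_ge i (p' + 1 + q + r) with h3 | h3
          · rw [sg_val3 h2 h3, sg_val3 (by omega) (by omega)]
          · rw [sg_val4 (by omega), sg_val4 (by omega)]
  refine ⟨CShape_JI hsh, ⟨hpa, hpb, ?_⟩, ?_⟩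
  · rcases Nat.eq_zero_or_pos p' with h0 | hp'1
    · subst h0
      exact Or.inl heq
    · by_cases hp'2 : 2 ≤ p'
      · refine Or.inr (Or.inr ⟨p'-1, ⟨by omega, ?_, ?_⟩, ?_⟩)
        · intro i hi
          rw [sg_val1 (by omega), sg_val1 (by omega)]
        · rw [sg_val1 (by omega)]
          have e : p' - 1 + 1 = p' := by omega
          rw [e, sg_val2 (le_refl _) (by omega)]
        · have e : p' - 1 + 1 = p' := by omega
          rw [e]
          exact heq
      · -- p' = 1 : step at first column
        have hp'e : p' = 1 := by omega
        subst hp'e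
        refine Or.inr (Or.inl ⟨?_, heq⟩)
        have d0 : dec1 (sg c 1 (q+1) r) 0 = c := by
          show (if (0:ℕ) = 0 then sg c 1 (q+1) r 0 - 1 else sg c 1 (q+1) r 0) = c
          rw [if_pos rfl, sg_val1 (by omega)]
          omega
        have dpos : ∀ i, 1 ≤ i → dec1 (sg c 1 (q+1) r) i = sg c 1 (q+1) r i := by
          intro i hi
          show (if i = 0 then sg c 1 (q+1) r 0 - 1 else sg c 1 (q+1) r i) = _
          rw [if_neg (by omega : ¬ i = 0)]
        have hplat : ∀ i ≤ q + 1, dec1 (sg c 1 (q+1) r) i = dec1 (sg c 1 (q+1) r) 0 := by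
          intro i hi
          rcases Nat.eq_zero_or_pos i with h0 | h0
          · subst h0; rfl
          · rw [dpos i h0, d0]
            exact sg_val2 (by omega) (by omega)
        have w1 : dec1 (sg c 1 (q+1) r) (q+1) = c := by
          rw [dpos (q+1) (by omega)]
          exact sg_val2 (by omega) (by omega)
        have w2 : dec1 (sg c 1 (q+1) r) (q+1+1) = sg c 1 (q+1) r (q+1+1) :=
          dpos (q+1+1) (by omega)
        by_cases hcc : c = 1
        · subst hcc
          obtain ⟨hr0, -⟩ := hc1 rfl
          subst hr0
          left
          refine ⟨q+1, by omega, hplat, ?_⟩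
          have w3 : sg 1 1 (q+1) 0 (q+1+1) = 0 := sg_val4 (by omega)
          omega
        · right
          refine ⟨q+1, by omega, hplat, ?_⟩
          rcases Nat.eq_zero_or_pos r with hr | hr
          · have w3 : sg c 1 (q+1) r (q+1+1) = 0 := sg_val4 (by omega)
            omega
          · have w3 : sg c 1 (q+1) r (q+1+1) = 1 := sg_val3 (by omega) (by omega)
            have := hr3 hr
            omega
  · intro h
    have h1 := congrFun h 1
    rw [twoOnes_1 hn] at h1
    by_cases hp'2 : 1 < p'
    · rw [sg_val1 hp'2] at h1
      omega
    · have hc2 : 2 ≤ c := by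
        rcases Nat.lt_or_ge c 2 with hcl | hcl
        · have := (hc1 (by omega)).2
          omega
        · exact hcl
      rw [sg_val2 (by omega) (by omega)] at h1
      omega

end St11


open St11 in
/-- For n ≥ 3, the join-irreducible partitions of n+1 not in the image of η
(which sends each join-irreducible partition of n to its unique join-irreducible
son, except η(2,1,…,1) := (2,2,1,…,1)) are exactly (2,1,…,1) and the partitions
(3,…,3,1,…,1) with at least one 3 and at least one 1. -/
theorem stmt11 (n : ℕ) (hn : 3 ≤ n) :
    ∀ b, JoinIrr (n + 1) b →
      ((¬ ∃ a, JoinIrr n a ∧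
          ((a ≠ twoOnes n ∧ Son n a b ∧ JoinIrr (n + 1) b) ∨
           (a = twoOnes n ∧ b = twoTwoOnes (n + 1)))) ↔
        (b = twoOnes (n + 1) ∨ ∃ m l, 1 ≤ m ∧ 1 ≤ l ∧ b = threesOnes m l)) := by
  intro b hJb
  constructor
  · -- not a son → b is (2,1,...,1) or (3,...,3,1,...,1)
    intro hne
    by_contra hR
    push_neg at hR
    obtain ⟨hR1, hR2⟩ := hR
    apply hne
    obtain ⟨c, p, q, r, hbeq, hc, hq, hr3, hc1, hNs⟩ := classify (by omega) hJb
    rcases Nat.eq_zero_or_pos p with hp0 | hp1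
    · subst hp0
      have hc2 : 2 ≤ c := by
        by_contra hcc
        have := (hc1 (by omega)).1
        omega
      have h00 : (c+1)*0 = 0 := by ring
      have hNs' : c * q + r = n + 1 := by omega
      have hr4 : 1 ≤ r → 4 ≤ c := by
        intro hr
        have h3 := hr3 hr
        rcases Nat.lt_or_ge c 4 with h4 | h4
        · exfalso
          have hce : c = 3 := by omega
          subst hce
          refine hR2 q r hq hr ?_
          rw [hbeq, threesOnes_eq, sg_p0 (by omega : 1 ≤ 3)]
        · exact h4
      by_cases hsp : c = 2 ∧ q = 2
      · obtain ⟨hce, hqe⟩ := hsp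
        subst hce; subst hqe
        have hr0 : r = 0 := by
          by_contra hr
          have := hr4 (by omega); omega
        subst hr0
        refine ⟨twoOnes n, JI_twoOnes hn, Or.inr ⟨rfl, ?_⟩⟩
        have e4 : n + 1 - 4 = 0 := by omega
        rw [hbeq, twoTwoOnes_eq (by omega), e4, sg_p0 (by omega : 1 ≤ 2)]
      · have hq3 : c = 2 → 3 ≤ q := by
          intro hce
          by_contra hqq
          have hr0 : r = 0 := by
            by_contra hr
            have := hr4 (by omega)
            omega
          rcases Nat.lt_or_ge q 2 with h | h
          · rw [hce] at hNs'
            omega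
          · exact hsp ⟨hce, by omega⟩
        obtain ⟨hJa, hSon, hne'⟩ := build_p0 hn hc2 hq hr4 hq3 hNs'
        exact ⟨_, hJa, Or.inl ⟨hne', by rw [hbeq]; exact hSon, hJb⟩⟩
    · by_cases hcp : c = 1 ∧ p = 1
      · exfalso
        obtain ⟨hce, hpe⟩ := hcp
        subst hce; subst hpe
        obtain ⟨-, hr0⟩ := hc1 rfl
        subst hr0
        apply hR1
        have e2 : q = n + 1 - 2 := by omega
        rw [hbeq, twoOnes_eq (by omega : 2 ≤ n + 1), e2]
      · by_cases hcp2 : c = 1 ∧ p = 2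
        · obtain ⟨hce, hpe⟩ := hcp2
          subst hce; subst hpe
          obtain ⟨-, hr0⟩ := hc1 rfl
          subst hr0
          refine ⟨twoOnes n, JI_twoOnes hn, Or.inr ⟨rfl, ?_⟩⟩
          have e4 : q = n + 1 - 4 := by omega
          rw [hbeq, twoTwoOnes_eq (by omega), e4]
        · have hc1' : c = 1 → r = 0 ∧ 3 ≤ p := by
            intro hce
            refine ⟨(hc1 hce).2, ?_⟩
            have hp2 : p ≠ 1 := fun h => hcp ⟨hce, h⟩
            have hp3 : p ≠ 2 := fun h => hcp2 ⟨hce, h⟩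
            omega
          obtain ⟨hJa, hSon, hne'⟩ := build_p1 hn hc hp1 hq hr3 hc1' hNs
          exact ⟨_, hJa, Or.inl ⟨hne', by rw [hbeq]; exact hSon, hJb⟩⟩
  · rintro (rfl | ⟨m, l, hm, hl, rfl⟩) ⟨a, hJa, hcase⟩
    · -- b = (2,1,...,1)
      have t0 : twoOnes (n+1) 0 = 2 := twoOnes_0 _
      have tpos : ∀ i, 1 ≤ i → i < n → twoOnes (n+1) i = 1 := by
        intro i h1 h2
        simp only [twoOnes, if_neg (by omega : ¬ i = 0)]
        rw [if_pos (by omega : i < n + 1 - 1)]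
      rcases hcase with ⟨hne, ⟨hpa, hpb, hd⟩, -⟩ | ⟨-, hbeq⟩
      · rcases hd with hd0 | ⟨hstep, hd1⟩ | ⟨l', hsp, hdl⟩
        · apply hJa.2.1
          funext i
          have hi := congrFun hd0 i
          simp only [downAt] at hi
          by_cases h0 : i = 0
          · subst h0
            rw [if_pos rfl, t0] at hi
            have ho : ones n 0 = 1 := by simp [ones]; omega
            omega
          · rw [if_neg h0] at hi
            by_cases h1 : i < n
            · rw [tpos i (by omega) h1] at hi
              have ho : ones n i = 1 := by simp [ones, h1]
              omega
            · have ht : twoOnes (n+1) i = 0 := by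
                simp only [twoOnes, if_neg h0]
                rw [if_neg (by omega : ¬ i < n + 1 - 1)]
              rw [ht] at hi
              have ho : ones n i = 0 := by
                simp only [ones]
                rw [if_neg (by omega : ¬ i < n)]
              omega
        · have h1 := congrFun hd1 1
          have h2 := congrFun hd1 2
          simp [downAt] at h1 h2
          rw [tpos 1 (by omega) (by omega)] at h1
          rw [tpos 2 (by omega) (by omega)] at h2
          have := hpa.1 1 2 (by omega)
          omega
        · obtain ⟨hl1, hpl, hdrop⟩ := hsp
          have h0 := congrFun hdl 0
          have hl' := congrFun hdl l'
          simp only [downAt] at h0 hl'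
          rw [if_neg (by omega : ¬ (0:ℕ) = l' + 1), t0] at h0
          rw [if_neg (by omega : ¬ l' = l' + 1)] at hl'
          have hale := hpl l' (le_refl _)
          have hble : twoOnes (n+1) l' ≤ 1 := by
            simp only [twoOnes, if_neg (by omega : ¬ l' = 0)]
            split <;> omega
          omega
      · have h1 := congrFun hbeq 1
        rw [twoOnes_1 (by omega)] at h1
        rw [show twoTwoOnes (n+1) 1 = 2 by simp [twoTwoOnes]] at h1
        omega
    · -- b = (3,...,3,1,...,1)
      have hbp := hJb.1
      have h3ml : 3 * m + l = n + 1 := by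
        have h1 : S (threesOnes m l) (n+1+(m+l)) = n+1 := part_S_N hbp (by omega)
        rw [threesOnes_eq] at h1
        rw [Ssg4 2 m 0 l (by omega)] at h1
        have e : (2+1)*m = 3*m := by ring
        omega
      have v1 : ∀ i, i < m → threesOnes m l i = 3 := by
        intro i h; simp [threesOnes, h]
      have v3 : ∀ i, m ≤ i → i < m + l → threesOnes m l i = 1 := by
        intro i h1 h2
        have hnm : ¬ i < m := by omega
        simp [threesOnes, hnm, h2]
      have v4 : ∀ i, m + l ≤ i → threesOnes m l i = 0 := by
        intro i h1
        have hnm : ¬ i < m := by omega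
        have h2 : ¬ i < m + l := by omega
        simp [threesOnes, hnm, h2]
      rcases hcase with ⟨hne, ⟨hpa, hpb, hd⟩, -⟩ | ⟨-, hbeq⟩
      · rcases hd with hd0 | ⟨hstep, hd1⟩ | ⟨l', hsp, hdl⟩
        · have h0 := congrFun hd0 0
          simp [downAt] at h0
          rw [v1 0 (by omega)] at h0
          by_cases hm2 : 2 ≤ m
          · have h1 := congrFun hd0 1
            simp [downAt] at h1
            rw [v1 1 (by omega)] at h1
            have := hpa.1 0 1 (by omega)
            omega
          · apply hne
            funext i
            by_cases h00 : i = 0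
            · subst h00
              have hi := congrFun hd0 0
              simp [downAt] at hi
              rw [twoOnes_0]
              omega
            · have hi := congrFun hd0 i
              simp only [downAt, if_neg h00] at hi
              simp only [twoOnes, if_neg h00]
              by_cases h1 : i < n - 1
              · rw [if_pos h1, ← hi]
                exact v3 i (by omega) (by omega)
              · rw [if_neg h1, ← hi]
                exact v4 i (by omega)
        · have e0 : dec1 a 0 = a 0 - 1 := by
            show (if (0:ℕ) = 0 then a 0 - 1 else a 0) = a 0 - 1
            rw [if_pos rfl]
          have e1 : dec1 a 1 = a 1 := by
            show (if (1:ℕ) = 0 then a 0 - 1 else a 1) = a 1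
            rw [if_neg one_ne_zero]
          have ha0 : a 0 = 3 := by
            have h := congrFun hd1 0
            simp [downAt] at h
            rw [v1 0 (by omega)] at h
            omega
          have ha1 : a 1 = 2 := by
            rcases hstep with ⟨l2, hl2, hpl2, -⟩ | ⟨k2, hk2, hpl2, -⟩
            · have := hpl2 1 hl2
              omega
            · have := hpl2 1 hk2
              omega
          have hb1 := congrFun hd1 1
          simp [downAt] at hb1
          have hm2 : 2 ≤ m := by
            by_contra hmm
            rw [v3 1 (by omega) (by omega)] at hb1
            omega
          by_cases hm3 : 3 ≤ m
          · have h2 := congrFun hd1 2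
            simp [downAt] at h2
            rw [v1 2 (by omega)] at h2
            have := hpa.1 1 2 (by omega)
            omega
          · have hme : m = 2 := by omega
            subst hme
            have haeq : a = sg 2 1 1 l := by
              funext i
              by_cases h00 : i = 0
              · subst h00; rw [sg_val1 (by omega)]; omega
              · by_cases h01 : i = 1
                · subst h01; rw [sg_val2 (le_refl _) (by omega)]; omega
                · have hi := congrFun hd1 i
                  simp only [downAt, if_neg h01] at hi
                  rcases Nat.lt_or_ge i (2 + l) with h2 | h2
                  · rw [sg_val3 (by omega) (by omega), ← hi]
                    exact v3 i (by omega) h2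
                  · rw [sg_val4 (by omega), ← hi]
                    exact v4 i (by omega)
            rw [haeq] at hJa
            exact notJI_32 (by omega) hl (by omega) hJa
        · obtain ⟨hl1, hpl, hdrop⟩ := hsp
          have ha0 : a 0 = 3 := by
            have h := congrFun hdl 0
            simp only [downAt, if_neg (by omega : ¬ (0:ℕ) = l' + 1)] at h
            rw [v1 0 (by omega)] at h
            omega
          have hal : a l' = 3 := by rw [hpl l' (le_refl _), ha0]
          have hal1 : a (l'+1) = 2 := by omega
          have hbl1 := congrFun hdl (l'+1)
          simp [downAt] at hbl1
          have hlm : l' + 1 < m := by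
            by_contra hh
            rcases Nat.lt_or_ge (l'+1) (m+l) with h2 | h2
            · rw [v3 (l'+1) (by omega) h2] at hbl1; omega
            · rw [v4 (l'+1) (by omega)] at hbl1; omega
          have hl2m : m ≤ l' + 2 := by
            by_contra hh
            have h := congrFun hdl (l'+2)
            simp only [downAt, if_neg (by omega : ¬ l' + 2 = l' + 1)] at h
            rw [v1 (l'+2) (by omega)] at h
            have := hpa.1 (l'+1) (l'+2) (by omega)
            omega
          have haeq : a = sg 2 (l'+1) 1 l := by
            funext i
            rcases Nat.lt_or_ge i (l'+1) with h0 | h0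
            · rw [sg_val1 h0]
              have h := congrFun hdl i
              simp only [downAt, if_neg (by omega : ¬ i = l' + 1)] at h
              rw [v1 i (by omega)] at h
              omega
            · by_cases h01 : i = l' + 1
              · subst h01
                rw [sg_val2 (le_refl _) (by omega)]
                omega
              · have h := congrFun hdl i
                simp only [downAt, if_neg h01] at h
                rcases Nat.lt_or_ge i (m + l) with h2 | h2
                · rw [sg_val3 (by omega) (by omega), ← h]
                  exact v3 i (by omega) h2
                · rw [sg_val4 (by omega), ← h]
                  exact v4 i (by omega)
          rw [haeq] at hJa
          exact notJI_32 (by omega) hl (by omega) hJa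
      · have h0 := congrFun hbeq 0
        rw [v1 0 (by omega)] at h0
        rw [show twoTwoOnes (n+1) 0 = 2 by simp [twoTwoOnes]] at h0
        omega
end

section
/- The number of join-irreducible elements of the dominance lattice of partitions of n+1 equals n(⌊n/3⌋ + 1) − (3/2)⌊n/3⌋² − (1/2)⌊n/3⌋ for all n ≥ 1. -/
-- partial sums
def SS (a : ℕ → ℕ) (j : ℕ) : ℕ := ∑ i ∈ Finset.range j, a i

lemma SS_succ (a : ℕ → ℕ) (j : ℕ) : SS a (j+1) = SS a j + a j :=
  Finset.sum_range_succ _ _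

lemma dom_iff {a b : ℕ → ℕ} : Dom a b ↔ ∀ j, SS a j ≤ SS b j := Iff.rfl

lemma SS_mono (a : ℕ → ℕ) : Monotone (SS a) := by
  intro i j hij
  exact Finset.sum_le_sum_of_subset (Finset.range_subset_range.2 hij)

section PartBasic
variable {M : ℕ} {a : ℕ → ℕ} (hp : IsPartition M a)
include hp

lemma SS_M : SS a M = M := hp.2.1

lemma SS_of_ge {j : ℕ} (h : M ≤ j) : SS a j = M := by
  rw [← hp.2.1]
  exact (Finset.sum_subset (Finset.range_subset_range.2 h)
    (fun i _ hi => hp.2.2 i (by simpa using hi))).symm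

lemma SS_le_M (j : ℕ) : SS a j ≤ M := by
  rcases le_total j M with h | h
  · exact (SS_mono a h).trans (le_of_eq hp.2.1)
  · exact le_of_eq (SS_of_ge hp h)

/-- Chebyshev-type inequality for antitone sequences. -/
lemma cheb {j r : ℕ} (hjr : j ≤ r) : j * SS a r ≤ r * SS a j := by
  have h1 : SS a r = SS a j + ∑ i ∈ Finset.Ico j r, a i := by
    rw [SS, SS, ← Finset.sum_range_add_sum_Ico _ hjr]
  have h2 : ∑ i ∈ Finset.Ico j r, a i ≤ (r - j) * a j := by
    calc ∑ i ∈ Finset.Ico j r, a i ≤ ∑ _i ∈ Finset.Ico j r, a j :=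
          Finset.sum_le_sum (fun i hi => hp.1 j i (Finset.mem_Ico.1 hi).1)
      _ = (r - j) * a j := by rw [Finset.sum_const, Nat.card_Ico, smul_eq_mul]
  have h3 : j * a j ≤ SS a j := by
    calc j * a j = ∑ _i ∈ Finset.range j, a j := by
          rw [Finset.sum_const, Finset.card_range, smul_eq_mul]
      _ ≤ SS a j := Finset.sum_le_sum (fun i hi => hp.1 i j (le_of_lt (Finset.mem_range.1 hi)))
  calc j * SS a r = j * SS a j + j * ∑ i ∈ Finset.Ico j r, a i := by rw [h1, Nat.mul_add]
    _ ≤ j * SS a j + j * ((r - j) * a j) := by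
        exact Nat.add_le_add_left (Nat.mul_le_mul_left _ h2) _
    _ = j * SS a j + (r - j) * (j * a j) := by ring_nf
    _ ≤ j * SS a j + (r - j) * SS a j := Nat.add_le_add_left (Nat.mul_le_mul_left _ h3) _
    _ = (j + (r - j)) * SS a j := by ring_nf
    _ = r * SS a j := by rw [Nat.add_sub_cancel' hjr]

/-- lower bound for partial sums from a single entry -/
lemma SS_lb {k v : ℕ} (h : v ≤ a k) : (k+1) * v ≤ SS a (k+1) := by
  calc (k+1) * v = ∑ _i ∈ Finset.range (k+1), v := by
        rw [Finset.sum_const, Finset.card_range, smul_eq_mul]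
    _ ≤ SS a (k+1) := Finset.sum_le_sum
        (fun i hi => le_trans h (hp.1 i k (Finset.mem_range_succ_iff.1 hi)))

/-- if an entry is 0 then the partial sum has stalled at M -/
lemma SS_stall {k : ℕ} (h : a k = 0) : SS a k = M := by
  have h0 : ∀ i, k ≤ i → a i = 0 := fun i hi => Nat.le_zero.1 (h ▸ hp.1 k i hi)
  rcases le_total M k with hMk | hkM
  · exact SS_of_ge hp hMk
  · rw [← hp.2.1]
    exact Finset.sum_subset (Finset.range_subset_range.2 hkM)
      (fun i _ hi => h0 i (by simpa using hi))

lemma a0_pos (hM : 1 ≤ M) : 1 ≤ a 0 := by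
  by_contra h
  have h0 : a 0 = 0 := by omega
  have := SS_stall hp h0
  simp [SS] at this; omega

/-- a boundary position is < M when a 0 ≥ 2 -/
lemma bdry_lt_M {q : ℕ} (h2 : 2 ≤ a 0) (hb : a q < a (q-1)) : q < M := by
  have hq1 : 1 ≤ q := by
    by_contra h; interval_cases q; simp at hb
  have h1 : ∀ i, i < q → 1 ≤ a i := by
    intro i hi
    have : a (q-1) ≤ a i := hp.1 i (q-1) (by omega)
    omega
  have : q + 1 ≤ SS a q := by
    have : SS a q = a 0 + ∑ i ∈ Finset.Ico 1 q, a i := by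
      rw [SS, Finset.range_eq_Ico, ← Finset.sum_eq_sum_Ico_succ_bot (by omega : 0 < q)]
    have h2' : (q - 1) * 1 ≤ ∑ i ∈ Finset.Ico 1 q, a i := by
      calc (q-1) * 1 = ∑ _i ∈ Finset.Ico 1 q, 1 := by
            rw [Finset.sum_const, Nat.card_Ico, smul_eq_mul]
        _ ≤ _ := Finset.sum_le_sum (fun i hi => h1 i (Finset.mem_Ico.1 hi).2)
    omega
  have := SS_le_M hp q
  omega

/-- next boundary after a position in a block -/
lemma next_bdry (k : ℕ) (hk : 1 ≤ a k) :
    ∃ p, k < p ∧ (∀ i, k ≤ i → i < p → a i = a k) ∧ a p < a k := by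
  have hex : ∃ j, k < j ∧ a j ≠ a k := by
    refine ⟨M + k + 1, by omega, ?_⟩
    rw [hp.2.2 _ (by omega)]; omega
  classical
  have hspec := Nat.find_spec hex
  refine ⟨Nat.find hex, hspec.1, ?_, ?_⟩
  · intro i hki hip
    by_contra hne
    rcases Nat.lt_or_ge k i with h | h
    · exact absurd ⟨h, hne⟩ (Nat.find_min hex hip)
    · have : i = k := le_antisymm h hki
      exact hne (by rw [this])
  · have := hp.1 k (Nat.find hex) (le_of_lt hspec.1)
    have hne := hspec.2
    omega

end PartBasic
-- (appended to part1 context when testing)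
/-- the partition (c+1)^r c^s 1^t -/
def pa (c r s t : ℕ) : ℕ → ℕ := fun i =>
  if i < r then c+1 else if i < r+s then c else if i < r+s+t then 1 else 0

lemma SS_pa1 (c r s t : ℕ) : ∀ j, j ≤ r → SS (pa c r s t) j = (c+1)*j := by
  intro j
  induction j with
  | zero => intro _; simp [SS]
  | succ j ih =>
    intro hj
    rw [SS_succ, ih (by omega), pa]
    simp only [if_pos (by omega : j < r)]
    ring

lemma SS_pa2 (c r s t : ℕ) : ∀ j, r ≤ j → j ≤ r + s →
    SS (pa c r s t) j = (c+1)*r + c*(j - r) := by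
  intro j hrj hjs
  induction j with
  | zero =>
    have : r = 0 := by omega
    simp [SS, this]
  | succ j ih =>
    rcases Nat.eq_or_lt_of_le hrj with h | h
    · rw [← h, SS_pa1 c r s t r le_rfl]
      simp
    · have hrj' : r ≤ j := by omega
      rw [SS_succ, ih hrj' (by omega), pa]
      simp only [if_neg (by omega : ¬ j < r), if_pos (by omega : j < r + s)]
      have : j + 1 - r = (j - r) + 1 := by omega
      rw [this]; ring

lemma SS_pa3 (c r s t : ℕ) : ∀ j, r + s ≤ j → j ≤ r + s + t →
    SS (pa c r s t) j = (c+1)*r + c*s + (j - r - s) := by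
  intro j hrj hjs
  induction j with
  | zero =>
    have hr : r = 0 := by omega
    have hs : s = 0 := by omega
    simp [SS, hr, hs]
  | succ j ih =>
    rcases Nat.eq_or_lt_of_le hrj with h | h
    · rw [← h, SS_pa2 c r s t (r+s) (by omega) (by omega),
        show r+s-r = s from by omega]
      simp
    · have hrj' : r + s ≤ j := by omega
      rw [SS_succ, ih hrj' (by omega), pa]
      simp only [if_neg (by omega : ¬ j < r), if_neg (by omega : ¬ j < r + s),
        if_pos (by omega : j < r + s + t)]
      omega

lemma SS_pa4 (c r s t : ℕ) : ∀ j, r + s + t ≤ j →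
    SS (pa c r s t) j = (c+1)*r + c*s + t := by
  intro j hj
  induction j with
  | zero =>
    have hr : r = 0 := by omega
    have hs : s = 0 := by omega
    have ht : t = 0 := by omega
    simp [SS, hr, hs, ht]
  | succ j ih =>
    rcases Nat.eq_or_lt_of_le hj with h | h
    · rw [← h, SS_pa3 c r s t (r+s+t) (by omega) (by omega)]
      omega
    · rw [SS_succ, ih (by omega), pa]
      simp only [if_neg (by omega : ¬ j < r), if_neg (by omega : ¬ j < r + s),
        if_neg (by omega : ¬ j < r + s + t)]
      omega

lemma pa_anti {c : ℕ} (hc : 1 ≤ c) (r s t : ℕ) : ∀ i j, i ≤ j → pa c r s t j ≤ pa c r s t i := by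
  intro i j hij
  unfold pa
  split_ifs <;> omega

lemma pa_partition {M c r s t : ℕ} (hc : 1 ≤ c) (hM : M = (c+1)*r + c*s + t) :
    IsPartition M (pa c r s t) := by
  have hle : r + s + t ≤ M := by nlinarith
  refine ⟨pa_anti hc r s t, ?_, ?_⟩
  · have := SS_pa4 c r s t M hle
    rw [SS] at this
    omega
  · intro i hi
    unfold pa
    split_ifs <;> omega
lemma anti_adj {f : ℕ → ℕ} (h : ∀ i, f (i+1) ≤ f i) : ∀ i j, i ≤ j → f j ≤ f i := by
  intro i j hij
  induction j with
  | zero => have : i = 0 := by omega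
            rw [this]
  | succ j ih =>
    rcases Nat.eq_or_lt_of_le hij with h' | h'
    · rw [h']
    · exact le_trans (h j) (ih (by omega))

section Decrement
variable {M : ℕ} {a : ℕ → ℕ}

/-- moving one box from row P+1 down to row q+1 (0-indexed rows P and q) -/
lemma decrement (hp : IsPartition M a) (P q : ℕ) (hPq : P < q)
    (hbp : a (P+1) < a P) (hbq : a q < a (q-1))
    (hsing : P + 1 = q → a q + 2 ≤ a P) (hqM : q < M) :
    ∃ b, IsPartition M b ∧
      (∀ j, SS b j + (if P + 1 ≤ j ∧ j ≤ q then 1 else 0) = SS a j) ∧ b ≠ a := by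
  classical
  set b : ℕ → ℕ := fun i => if i = P then a P - 1 else if i = q then a q + 1 else a i with hbdef
  have hbval : ∀ j, b j = if j = P then a P - 1 else if j = q then a q + 1 else a j :=
    fun j => by rw [hbdef]
  have hadj : ∀ i, a (i+1) ≤ a i := fun i => hp.1 i (i+1) (by omega)
  have haP : 1 ≤ a P := by have := hbp; omega
  have hSb : ∀ j, SS b j + (if P + 1 ≤ j ∧ j ≤ q then 1 else 0) = SS a j := by
    intro j
    induction j with
    | zero => simp [SS]
    | succ j ih =>
      rw [SS_succ, SS_succ]
      by_cases h1 : j = P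
      · have e : b j = a P - 1 := by rw [hbval, if_pos h1]
        have haj : a j = a P := by rw [h1]
        rw [e]
        split_ifs at ih ⊢ <;> omega
      · by_cases h2 : j = q
        · have e : b j = a q + 1 := by rw [hbval, if_neg h1, if_pos h2]
          have haj : a j = a q := by rw [h2]
          rw [e]
          split_ifs at ih ⊢ <;> omega
        · have e : b j = a j := by rw [hbval, if_neg h1, if_neg h2]
          rw [e]
          split_ifs at ih ⊢ <;> omega
  have hbadj : ∀ i, b (i+1) ≤ b i := by
    intro i
    by_cases h1 : i = P
    · have e2 : b i = a P - 1 := by rw [hbval, if_pos h1]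
      by_cases h2 : i + 1 = q
      · have e1 : b (i+1) = a q + 1 := by rw [hbval, if_neg (by omega), if_pos h2]
        have := hsing (by omega)
        rw [e1, e2]; omega
      · have e1 : b (i+1) = a (i+1) := by rw [hbval, if_neg (by omega), if_neg h2]
        have h3 : a (i+1) = a (P+1) := by rw [h1]
        rw [e1, e2, h3]; omega
    · by_cases h2 : i = q
      · have e2 : b i = a q + 1 := by rw [hbval, if_neg h1, if_pos h2]
        have e1 : b (i+1) = a (i+1) := by
          rw [hbval, if_neg (by omega), if_neg (by omega)]
        have h4 : a (i+1) ≤ a q := by rw [← h2]; exact hadj i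
        rw [e1, e2]; omega
      · have e2 : b i = a i := by rw [hbval, if_neg h1, if_neg h2]
        rw [e2]
        by_cases h3 : i + 1 = P
        · have e1 : b (i+1) = a P - 1 := by rw [hbval, if_pos h3]
          have h4 : a P ≤ a i := by rw [← h3]; exact hadj i
          rw [e1]; omega
        · by_cases h4 : i + 1 = q
          · have e1 : b (i+1) = a q + 1 := by rw [hbval, if_neg h3, if_pos h4]
            have h5 : a (q-1) = a i := by rw [show q - 1 = i from by omega]
            rw [e1]; omega
          · have e1 : b (i+1) = a (i+1) := by rw [hbval, if_neg h3, if_neg h4]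
            rw [e1]; exact hadj i
  refine ⟨b, ⟨anti_adj hbadj, ?_, ?_⟩, hSb, ?_⟩
  · have h0 := hSb M
    rw [if_neg (by omega : ¬ (P + 1 ≤ M ∧ M ≤ q))] at h0
    have h1 : SS a M = M := hp.2.1
    show SS b M = M
    omega
  · intro i hi
    rw [hbval, if_neg (by omega : i ≠ P), if_neg (by omega : i ≠ q)]
    exact hp.2.2 i hi
  · intro h
    have h0 : b P = a P := by rw [h]
    rw [hbval, if_pos rfl] at h0
    omega

/-- two disjoint decrements: a is the sup of the results -/
lemma sup_disjoint {b c : ℕ → ℕ} {p q p' q' : ℕ}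
    (hpa : IsPartition M a)
    (hSb : ∀ j, SS b j + (if p ≤ j ∧ j ≤ q then 1 else 0) = SS a j)
    (hSc : ∀ j, SS c j + (if p' ≤ j ∧ j ≤ q' then 1 else 0) = SS a j)
    (hdisj : q < p') : IsSupOf M b c a := by
  refine ⟨hpa, ?_, ?_, ?_⟩
  · intro j; have := hSb j
    show SS b j ≤ SS a j
    split_ifs at this <;> omega
  · intro j; have := hSc j
    show SS c j ≤ SS a j
    split_ifs at this <;> omega
  · intro d _hd h1 h2 j
    have e1 := hSb j
    have e2 := hSc j
    have g1 : SS b j ≤ SS d j := h1 j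
    have g2 : SS c j ≤ SS d j := h2 j
    show SS a j ≤ SS d j
    split_ifs at e1 e2 <;> omega

/-- two decrements overlapping in one point where a has a slope-1 descent -/
lemma sup_overlap {b c : ℕ → ℕ} {p q q' : ℕ}
    (hpa : IsPartition M a) (hpq : p < q) (hqq : q < q')
    (hslope : a (q-1) = a q + 1)
    (hSb : ∀ j, SS b j + (if p ≤ j ∧ j ≤ q then 1 else 0) = SS a j)
    (hSc : ∀ j, SS c j + (if q ≤ j ∧ j ≤ q' then 1 else 0) = SS a j) :
    IsSupOf M b c a := by
  refine ⟨hpa, ?_, ?_, ?_⟩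
  · intro j; have := hSb j
    show SS b j ≤ SS a j
    split_ifs at this <;> omega
  · intro j; have := hSc j
    show SS c j ≤ SS a j
    split_ifs at this <;> omega
  · intro d hd h1 h2 j
    show SS a j ≤ SS d j
    by_cases hj : j = q
    · subst hj
      have hq1 : 1 ≤ j := by omega
      have hdd : d j ≤ d (j-1) := hd.1 (j-1) j (by omega)
      have hs1 : SS d j = SS d (j-1) + d (j-1) := by
        have := SS_succ d (j-1)
        rw [show j - 1 + 1 = j from by omega] at this
        exact this
      have hs2 : SS d (j+1) = SS d j + d j := SS_succ d j
      have ha1 : SS a j = SS a (j-1) + a (j-1) := by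
        have := SS_succ a (j-1)
        rw [show j - 1 + 1 = j from by omega] at this
        exact this
      have ha2 : SS a (j+1) = SS a j + a j := SS_succ a j
      have e1 : SS c (j-1) + 0 = SS a (j-1) := by
        have := hSc (j-1); rw [if_neg (by omega)] at this; exact this
      have e2 : SS b (j+1) + 0 = SS a (j+1) := by
        have := hSb (j+1); rw [if_neg (by omega)] at this; exact this
      have g1 : SS c (j-1) ≤ SS d (j-1) := h2 (j-1)
      have g2 : SS b (j+1) ≤ SS d (j+1) := h1 (j+1)
      omega
    · have e1 := hSb j
      have e2 := hSc j
      have g1 : SS b j ≤ SS d j := h1 j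
      have g2 : SS c j ≤ SS d j := h2 j
      split_ifs at e1 e2 <;> omega

end Decrement
section Claims
variable {M c r s t : ℕ} {x : ℕ → ℕ}

/-- key uniqueness claim at the singleton position r+s -/
lemma claimS (hM : M = (c+1)*r + c*s + t) (hc : 1 ≤ c) (hr : 1 ≤ r)
    (hx : IsPartition M x) (hdom : ∀ j, SS x j ≤ SS (pa c r s t) j)
    (heq : SS x (r+s) = (c+1)*r + c*s) : x = pa c r s t := by
  -- Step A : downward propagation through the c-block
  have A : ∀ k, k ≤ s → SS x (r+s-k) = (c+1)*r + c*(s-k) := by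
    intro k
    induction k with
    | zero => intro _; simpa using heq
    | succ k ih =>
      intro hks
      have ihk := ih (by omega)
      set j1 := r + s - (k+1) with hj1def
      have hj1 : j1 + 1 = r + s - k := by omega
      have hj1r : r ≤ j1 := by omega
      have hub : SS x j1 ≤ (c+1)*r + c*(j1 - r) := by
        have := hdom j1
        rwa [SS_pa2 c r s t j1 hj1r (by omega)] at this
      have hjr : j1 - r = s - (k+1) := by omega
      rw [hjr] at hub
      rcases Nat.eq_or_lt_of_le hub with h | h
      · omega
      -- strict: derive x j1 ≥ c+1 and contradict
      · exfalso
        have hstep : SS x (r+s-k) = SS x j1 + x j1 := by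
          have h' := SS_succ x j1
          rwa [hj1] at h'
        have hcs : c*(s-k) = c*(s-(k+1)) + c := by
          rw [show s - k = (s - (k+1)) + 1 from by omega, Nat.mul_succ]
        have hxlb : c + 1 ≤ x j1 := by omega
        have hlb := SS_lb hx hxlb
        rw [hj1] at hlb
        have e1 : (r+s-k) * (c+1) = r*(c+1) + (s-k)*(c+1) := by
          rw [show r + s - k = r + (s - k) from by omega, Nat.add_mul]
        have e2 : (s-k)*(c+1) = (s-k)*c + (s-k) := by rw [Nat.mul_succ]
        have e3 : (s-k)*c = c*(s-k) := Nat.mul_comm _ _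
        have e4 : r*(c+1) = (c+1)*r := Nat.mul_comm _ _
        omega
  -- Step B
  have B : SS x r = (c+1)*r := by
    have := A s le_rfl
    simpa using this
  -- Step C : the first block
  have C : ∀ j, j ≤ r → SS x j = (c+1)*j := by
    intro j hjr
    have hub : SS x j ≤ (c+1)*j := by
      have := hdom j
      rwa [SS_pa1 c r s t j hjr] at this
    have hch := cheb hx hjr
    rw [B] at hch
    have h2 : r * ((c+1)*j) ≤ r * SS x j := by
      calc r * ((c+1)*j) = j * ((c+1)*r) := by ring
        _ ≤ r * SS x j := hch
    exact le_antisymm hub (Nat.le_of_mul_le_mul_left h2 (by omega))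
  -- Step D : the tail of ones
  have D : ∀ k, k ≤ t → SS x (r+s+k) = (c+1)*r + c*s + k := by
    intro k
    induction k with
    | zero => intro _; simpa using heq
    | succ k ih =>
      intro hkt
      have ihk := ih (by omega)
      have hub : SS x (r+s+(k+1)) ≤ (c+1)*r + c*s + (k+1) := by
        have := hdom (r+s+(k+1))
        rw [SS_pa3 c r s t (r+s+(k+1)) (by omega) (by omega)] at this
        omega
      rcases Nat.eq_or_lt_of_le hub with h | h
      · omega
      · exfalso
        have hstep : SS x (r+s+k+1) = SS x (r+s+k) + x (r+s+k) := SS_succ x _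
        have hx0 : x (r+s+k) = 0 := by
          rw [show r+s+(k+1) = r+s+k+1 from by omega] at h
          omega
        have := SS_stall hx hx0
        omega
  -- all partial sums agree
  have E : ∀ j, SS x j = SS (pa c r s t) j := by
    intro j
    rcases le_or_gt j r with h1 | h1
    · rw [C j h1, SS_pa1 c r s t j h1]
    · rcases le_or_gt j (r+s) with h2 | h2
      · have hA := A (r+s-j) (by omega)
        rw [show r+s-(r+s-j) = j from by omega] at hA
        rw [hA, SS_pa2 c r s t j (by omega) h2, show s-(r+s-j) = j - r from by omega]
      · rcases le_or_gt j (r+s+t) with h3 | h3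
        · have hD := D (j-(r+s)) (by omega)
          rw [show r+s+(j-(r+s)) = j from by omega] at hD
          rw [hD, SS_pa3 c r s t j (by omega) h3]
          omega
        · have hD := D t le_rfl
          have hmono := SS_mono x (show r+s+t ≤ j from by omega)
          have hub := hdom j
          rw [SS_pa4 c r s t j (by omega)] at hub ⊢
          omega
  funext i
  have h1 := E i
  have h2 := E (i+1)
  have h3 := SS_succ x i
  have h4 := SS_succ (pa c r s t) i
  omega

/-- key uniqueness claim for partitions (2^r 1^t) : agreement anywhere on [r, r+t] -/
lemma claimA (hM : M = 2*r + t) (hr : 1 ≤ r)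
    (hx : IsPartition M x) (hdom : ∀ j, SS x j ≤ SS (pa 1 r 0 t) j)
    {j0 : ℕ} (hj0r : r ≤ j0) (hj0t : j0 ≤ r + t) (heq : SS x j0 = r + j0) :
    x = pa 1 r 0 t := by
  have hpa3 : ∀ j, r ≤ j → j ≤ r + t → SS (pa 1 r 0 t) j = r + j := by
    intro j h1 h2
    rw [SS_pa3 1 r 0 t j (by omega) (by omega)]
    omega
  -- downward
  have A : ∀ k, k ≤ j0 - r → SS x (j0 - k) = r + (j0 - k) := by
    intro k
    induction k with
    | zero => intro _; simpa using heq
    | succ k ih =>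
      intro hk
      have ihk := ih (by omega)
      set j1 := j0 - (k+1) with hj1def
      have hj1 : j1 + 1 = j0 - k := by omega
      have hub : SS x j1 ≤ r + j1 := by
        have := hdom j1
        rwa [hpa3 j1 (by omega) (by omega)] at this
      rcases Nat.eq_or_lt_of_le hub with h | h
      · omega
      · exfalso
        have hstep : SS x (j1+1) = SS x j1 + x j1 := SS_succ x j1
        have hxlb : 2 ≤ x j1 := by rw [hj1] at hstep; omega
        have hlb := SS_lb hx hxlb
        rw [hj1] at hlb
        omega
  have B : SS x r = 2*r := by
    have := A (j0 - r) (le_rfl)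
    rw [show j0 - (j0 - r) = r from by omega] at this
    omega
  have C : ∀ j, j ≤ r → SS x j = 2*j := by
    intro j hjr
    have hub : SS x j ≤ 2*j := by
      have := hdom j
      rw [SS_pa1 1 r 0 t j hjr] at this
      omega
    have hch := cheb hx hjr
    rw [B] at hch
    have h2 : r * (2*j) ≤ r * SS x j := by
      calc r * (2*j) = j * (2*r) := by ring
        _ ≤ r * SS x j := hch
    exact le_antisymm hub (Nat.le_of_mul_le_mul_left h2 (by omega))
  have D : ∀ k, k ≤ r + t - j0 → SS x (j0 + k) = r + j0 + k := by
    intro k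
    induction k with
    | zero => intro _; simpa using heq
    | succ k ih =>
      intro hk
      have ihk := ih (by omega)
      have hub : SS x (j0+(k+1)) ≤ r + j0 + (k+1) := by
        have := hdom (j0+(k+1))
        rw [hpa3 (j0+(k+1)) (by omega) (by omega)] at this
        omega
      rcases Nat.eq_or_lt_of_le hub with h | h
      · omega
      · exfalso
        have hstep : SS x (j0+k+1) = SS x (j0+k) + x (j0+k) := SS_succ x _
        have hx0 : x (j0+k) = 0 := by
          rw [show j0+(k+1) = j0+k+1 from by omega] at h
          omega
        have := SS_stall hx hx0
        omega
  have E : ∀ j, SS x j = SS (pa 1 r 0 t) j := by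
    intro j
    rcases le_or_gt j r with h1 | h1
    · rw [C j h1, SS_pa1 1 r 0 t j h1]
    · rcases le_or_gt j j0 with h2 | h2
      · have hA := A (j0 - j) (by omega)
        rw [show j0-(j0-j) = j from by omega] at hA
        rw [hA, hpa3 j (by omega) (by omega)]
      · rcases le_or_gt j (r+t) with h3 | h3
        · have hD := D (j-j0) (by omega)
          rw [show j0+(j-j0) = j from by omega] at hD
          rw [hD, hpa3 j (by omega) h3]
          omega
        · have hD := D (r+t-j0) le_rfl
          rw [show j0+(r+t-j0) = r+t from by omega] at hD
          have hmono := SS_mono x (show r+t ≤ j from by omega)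
          have hub := hdom j
          rw [SS_pa4 1 r 0 t j (by omega)] at hub ⊢
          omega
  funext i
  have h1 := E i
  have h2 := E (i+1)
  have h3 := SS_succ x i
  have h4 := SS_succ (pa 1 r 0 t) i
  omega

end Claims
section ShapeJI

lemma shape_JoinIrr {M c r s t : ℕ} (hc : 1 ≤ c) (hr : 1 ≤ r)
    (h1 : c = 1 → s = 0) (h2 : c = 2 → s = 0 ∨ t = 0)
    (hM : M = (c+1)*r + c*s + t) : JoinIrr M (pa c r s t) := by
  have hpa : IsPartition M (pa c r s t) := pa_partition hc hM
  have h2r : 2*r ≤ (c+1)*r := Nat.mul_le_mul_right r (by omega)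
  have h1s : 1*s ≤ c*s := Nat.mul_le_mul_right s hc
  have hM2 : 2 ≤ M := by omega
  refine ⟨hpa, ?_, ?_⟩
  · intro h
    have h0 := congrFun h 0
    unfold pa ones at h0
    rw [if_pos (by omega : 0 < r), if_pos (by omega : 0 < M)] at h0
    omega
  · intro b c' hb hc' hsup
    by_cases hba : b = pa c r s t
    · exact Or.inl hba.symm
    by_cases hca : c' = pa c r s t
    · exact Or.inr hca.symm
    exfalso
    have hdomb : Dom b (pa c r s t) := hsup.2.1
    have hdomc : Dom c' (pa c r s t) := hsup.2.2.1
    by_cases hcase : c = 1 ∧ 1 ≤ t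
    · -- a = 2^r 1^t ; the unique lower cover decrements on [r, r+t]
      obtain ⟨hc1, ht1⟩ := hcase
      have hs0 : s = 0 := h1 hc1
      subst hc1; subst hs0
      have hM' : M = 2*r + t := by omega
      obtain ⟨w, hw, hSw, -⟩ := decrement hpa (r-1) (r+t) (by omega)
        (by unfold pa; rw [show r - 1 + 1 = r from by omega]; split_ifs <;> omega)
        (by unfold pa; split_ifs <;> omega)
        (by omega) (by omega)
      have key : ∀ e, IsPartition M e → Dom e (pa 1 r 0 t) → e ≠ pa 1 r 0 t →
          Dom e w := by
        intro e he hde hne j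
        have hSwj := hSw j
        show SS e j ≤ SS w j
        rw [show r - 1 + 1 = r from by omega] at hSwj
        by_cases hj : r ≤ j ∧ j ≤ r + t
        · rw [if_pos hj] at hSwj
          by_contra hlt
          have hub : SS e j ≤ SS (pa 1 r 0 t) j := hde j
          have hpaj : SS (pa 1 r 0 t) j = r + j := by
            rw [SS_pa3 1 r 0 t j (by omega) (by omega)]
            omega
          have heq' : SS e j = r + j := by omega
          exact hne (claimA hM' hr he (fun j' => hde j') hj.1 hj.2 heq')
        · rw [if_neg hj] at hSwj
          have hub : SS e j ≤ SS (pa 1 r 0 t) j := hde j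
          omega
      have hfin := hsup.2.2.2 w hw (key b hb hdomb hba) (key c' hc' hdomc hca) r
      have hSwr := hSw r
      rw [show r - 1 + 1 = r from by omega, if_pos (by omega : r ≤ r ∧ r ≤ r + t)] at hSwr
      have : SS (pa 1 r 0 t) r ≤ SS w r := hfin
      omega
    · -- singleton decrement at position r+s
      have hgap : pa c r s t (r+s) + 2 ≤ pa c r s t (r+s-1) := by
        unfold pa
        split_ifs <;> omega
      obtain ⟨w, hw, hSw, -⟩ := decrement hpa (r+s-1) (r+s) (by omega)
        (by rw [show r + s - 1 + 1 = r + s from by omega]; omega)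
        (by omega)
        (fun _ => hgap) (by omega)
      have key : ∀ e, IsPartition M e → Dom e (pa c r s t) → e ≠ pa c r s t →
          Dom e w := by
        intro e he hde hne j
        have hSwj := hSw j
        show SS e j ≤ SS w j
        rw [show r + s - 1 + 1 = r + s from by omega] at hSwj
        by_cases hj : r + s ≤ j ∧ j ≤ r + s
        · rw [if_pos hj] at hSwj
          have hjrs : j = r + s := by omega
          by_contra hlt
          rw [hjrs] at hSwj hlt
          have h3 : SS e (r+s) ≤ SS (pa c r s t) (r+s) := hde (r+s)
          have h4 : SS (pa c r s t) (r+s) = (c+1)*r + c*s := by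
            rw [SS_pa3 c r s t (r+s) (by omega) (by omega)]
            omega
          have heq : SS e (r+s) = (c+1)*r + c*s := by omega
          exact hne (claimS hM hc hr he (fun j' => hde j') heq)
        · rw [if_neg hj] at hSwj
          have hub : SS e j ≤ SS (pa c r s t) j := hde j
          omega
      have hfin := hsup.2.2.2 w hw (key b hb hdomb hba) (key c' hc' hdomc hca) (r+s)
      have hSwr := hSw (r+s)
      rw [show r + s - 1 + 1 = r + s from by omega,
        if_pos (by omega : r + s ≤ r + s ∧ r + s ≤ r + s)] at hSwr
      have : SS (pa c r s t) (r+s) ≤ SS w (r+s) := hfin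
      omega

end ShapeJI
section Converse
variable {M : ℕ} {a : ℕ → ℕ}

lemma eq_pa_of_blocks (hpa : IsPartition M a) (c r s t : ℕ) (hc : 1 ≤ c)
    (hb1 : ∀ i, i < r → a i = c+1)
    (hb2 : ∀ i, r ≤ i → i < r+s → a i = c)
    (hb3 : ∀ i, r+s ≤ i → i < r+s+t → a i = 1)
    (hb4 : a (r+s+t) = 0) :
    a = pa c r s t ∧ M = (c+1)*r + c*s + t := by
  have hzero : ∀ i, r+s+t ≤ i → a i = 0 := by
    intro i hi
    have := hpa.1 (r+s+t) i hi
    omega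
  have hfun : a = pa c r s t := by
    funext i
    unfold pa
    split_ifs with g1 g2 g3
    · exact hb1 i g1
    · exact hb2 i (by omega) g2
    · exact hb3 i (by omega) g3
    · exact hzero i (by omega)
  have hpos : ∀ i, i < r+s+t → 1 ≤ a i := by
    intro i hi
    by_cases g1 : i < r
    · rw [hb1 i g1]; omega
    · by_cases g2 : i < r+s
      · rw [hb2 i (by omega) g2]; omega
      · rw [hb3 i (by omega) (by omega)]
  have h5 : r+s+t ≤ SS a (r+s+t) := by
    calc r+s+t = ∑ _i ∈ Finset.range (r+s+t), 1 := by simp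
      _ ≤ SS a (r+s+t) := Finset.sum_le_sum
          (fun i hi => hpos i (Finset.mem_range.1 hi))
  have h6 := SS_le_M hpa (r+s+t)
  have h7 : SS a M = M := hpa.2.1
  rw [hfun] at h7
  rw [SS_pa4 c r s t M (by omega)] at h7
  exact ⟨hfun, h7.symm⟩

/-- main dichotomy: a partition with largest part ≥ 2 is a shape or is reducible -/
lemma shape_or_red (hpa : IsPartition M a) (h2 : 2 ≤ a 0) :
    (∃ c r s t, 1 ≤ c ∧ 1 ≤ r ∧ (c = 1 → s = 0) ∧ (c = 2 → s = 0 ∨ t = 0) ∧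
      M = (c+1)*r + c*s + t ∧ a = pa c r s t) ∨
    (∃ b c', IsPartition M b ∧ IsPartition M c' ∧ b ≠ a ∧ c' ≠ a ∧
      IsSupOf M b c' a) := by
  obtain ⟨p1, hp1, hB1, hv2⟩ := next_bdry hpa 0 (by omega)
  have ha0 : a (p1 - 1) = a 0 := hB1 (p1-1) (by omega) (by omega)
  have hbd1 : a p1 < a (p1 - 1) := by omega
  have hq1M : p1 < M := bdry_lt_M hpa h2 hbd1
  by_cases hv2z : a p1 = 0
  · -- rectangle
    left
    obtain ⟨hfun, hMeq⟩ := eq_pa_of_blocks hpa (a 0 - 1) p1 0 0 (by omega)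
      (fun i hi => by rw [hB1 i (by omega) hi]; omega)
      (fun i h1 h2 => by omega)
      (fun i h1 h2 => by omega)
      (by rw [show p1 + 0 + 0 = p1 from by omega]; exact hv2z)
    exact ⟨a 0 - 1, p1, 0, 0, by omega, by omega, fun _ => rfl, fun _ => Or.inl rfl,
      hMeq, hfun⟩
  obtain ⟨p2, hp12, hB2, hv3⟩ := next_bdry hpa p1 (by omega)
  have hap2 : a (p2 - 1) = a p1 := hB2 (p2-1) (by omega) (by omega)
  have hbd2 : a p2 < a (p2 - 1) := by omega
  have hq2M : p2 < M := bdry_lt_M hpa h2 hbd2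
  by_cases hv21 : a p1 = 1
  · -- (c+1)^r 1^t
    left
    obtain ⟨hfun, hMeq⟩ := eq_pa_of_blocks hpa (a 0 - 1) p1 0 (p2 - p1) (by omega)
      (fun i hi => by rw [hB1 i (by omega) hi]; omega)
      (fun i h1 h2 => by omega)
      (fun i h1 h2 => by
        rw [show a i = a p1 from hB2 i (by omega) (by omega)]; omega)
      (by rw [show p1 + 0 + (p2 - p1) = p2 from by omega]; omega)
    exact ⟨a 0 - 1, p1, 0, p2 - p1, by omega, by omega, fun _ => rfl,
      fun _ => Or.inl rfl, hMeq, hfun⟩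
  -- now a p1 ≥ 2
  by_cases hgap1 : a p1 + 2 ≤ a 0
  · -- reducible with singleton at p1 and an interval starting at p2
    right
    obtain ⟨b, hbp, hSb, hbne⟩ := decrement hpa (p1-1) p1 (by omega)
      (by rw [show p1 - 1 + 1 = p1 from by omega]; exact hbd1)
      hbd1 (fun _ => by omega) hq1M
    simp only [show p1 - 1 + 1 = p1 from by omega] at hSb
    by_cases hgap2 : a p2 + 2 ≤ a p1
    · obtain ⟨c', hcp, hSc, hcne⟩ := decrement hpa (p2-1) p2 (by omega)
        (by rw [show p2 - 1 + 1 = p2 from by omega]; exact hbd2)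
        hbd2 (fun _ => by omega) hq2M
      simp only [show p2 - 1 + 1 = p2 from by omega] at hSc
      exact ⟨b, c', hbp, hcp, hbne, hcne, sup_disjoint hpa hSb hSc (by omega)⟩
    · -- extend to next boundary p3
      obtain ⟨p3, hp23, hB3, hv4⟩ := next_bdry hpa p2 (by omega)
      have hap3 : a (p3 - 1) = a p2 := hB3 (p3-1) (by omega) (by omega)
      have hbd3 : a p3 < a (p3 - 1) := by omega
      have hq3M : p3 < M := bdry_lt_M hpa h2 hbd3
      obtain ⟨c', hcp, hSc, hcne⟩ := decrement hpa (p2-1) p3 (by omega)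
        (by rw [show p2 - 1 + 1 = p2 from by omega]; exact hbd2)
        hbd3 (fun h => by omega) hq3M
      simp only [show p2 - 1 + 1 = p2 from by omega] at hSc
      exact ⟨b, c', hbp, hcp, hbne, hcne, sup_disjoint hpa hSb hSc (by omega)⟩
  -- now a 0 = a p1 + 1
  by_cases hv3z : a p2 = 0
  · -- (c+1)^r c^s
    left
    obtain ⟨hfun, hMeq⟩ := eq_pa_of_blocks hpa (a p1) p1 (p2 - p1) 0 (by omega)
      (fun i hi => by rw [hB1 i (by omega) hi]; omega)
      (fun i h1 h2 => hB2 i h1 (by omega))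
      (fun i h1 h2 => by omega)
      (by rw [show p1 + (p2 - p1) + 0 = p2 from by omega]; exact hv3z)
    exact ⟨a p1, p1, p2 - p1, 0, by omega, by omega, fun h => by omega,
      fun _ => Or.inr rfl, hMeq, hfun⟩
  by_cases hv31 : a p2 = 1
  · obtain ⟨p3, hp23, hB3, hv4⟩ := next_bdry hpa p2 (by omega)
    have hap3 : a (p3 - 1) = a p2 := hB3 (p3-1) (by omega) (by omega)
    have hbd3 : a p3 < a (p3 - 1) := by omega
    have hq3M : p3 < M := bdry_lt_M hpa h2 hbd3
    by_cases hv1c : a p1 = 2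
    · -- the 3^r 2^s 1^t pattern : reducible via overlapping intervals
      right
      obtain ⟨b, hbp, hSb, hbne⟩ := decrement hpa (p1-1) p2 (by omega)
        (by rw [show p1 - 1 + 1 = p1 from by omega]; exact hbd1)
        hbd2 (fun h => by omega) hq2M
      simp only [show p1 - 1 + 1 = p1 from by omega] at hSb
      obtain ⟨c', hcp, hSc, hcne⟩ := decrement hpa (p2-1) p3 (by omega)
        (by rw [show p2 - 1 + 1 = p2 from by omega]; exact hbd2)
        hbd3 (fun h => by omega) hq3M
      simp only [show p2 - 1 + 1 = p2 from by omega] at hSc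
      exact ⟨b, c', hbp, hcp, hbne, hcne,
        sup_overlap hpa (by omega) (by omega) (by omega) hSb hSc⟩
    · -- (c+1)^r c^s 1^t with c ≥ 3
      left
      obtain ⟨hfun, hMeq⟩ := eq_pa_of_blocks hpa (a p1) p1 (p2 - p1) (p3 - p2) (by omega)
        (fun i hi => by rw [hB1 i (by omega) hi]; omega)
        (fun i h1 h2 => hB2 i h1 (by omega))
        (fun i h1 h2 => by
          rw [show a i = a p2 from hB3 i (by omega) (by omega)]; omega)
        (by rw [show p1 + (p2 - p1) + (p3 - p2) = p3 from by omega]; omega)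
      exact ⟨a p1, p1, p2 - p1, p3 - p2, by omega, by omega, fun h => by omega,
        fun h => by omega, hMeq, hfun⟩
  · -- a p2 ≥ 2 (and a 0 = a p1 + 1) : reducible
    right
    obtain ⟨b, hbp, hSb, hbne⟩ := decrement hpa (p1-1) p2 (by omega)
      (by rw [show p1 - 1 + 1 = p1 from by omega]; exact hbd1)
      hbd2 (fun h => by omega) hq2M
    simp only [show p1 - 1 + 1 = p1 from by omega] at hSb
    obtain ⟨p3, hp23, hB3, hv4⟩ := next_bdry hpa p2 (by omega)
    have hap3 : a (p3 - 1) = a p2 := hB3 (p3-1) (by omega) (by omega)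
    have hbd3 : a p3 < a (p3 - 1) := by omega
    have hq3M : p3 < M := bdry_lt_M hpa h2 hbd3
    by_cases hgap3 : a p3 + 2 ≤ a p2
    · obtain ⟨c', hcp, hSc, hcne⟩ := decrement hpa (p3-1) p3 (by omega)
        (by rw [show p3 - 1 + 1 = p3 from by omega]; exact hbd3)
        hbd3 (fun _ => by omega) hq3M
      simp only [show p3 - 1 + 1 = p3 from by omega] at hSc
      exact ⟨b, c', hbp, hcp, hbne, hcne, sup_disjoint hpa hSb hSc (by omega)⟩
    · obtain ⟨p4, hp34, hB4, hv5⟩ := next_bdry hpa p3 (by omega)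
      have hap4 : a (p4 - 1) = a p3 := hB4 (p4-1) (by omega) (by omega)
      have hbd4 : a p4 < a (p4 - 1) := by omega
      have hq4M : p4 < M := bdry_lt_M hpa h2 hbd4
      obtain ⟨c', hcp, hSc, hcne⟩ := decrement hpa (p3-1) p4 (by omega)
        (by rw [show p3 - 1 + 1 = p3 from by omega]; exact hbd3)
        hbd4 (fun h => by omega) hq4M
      simp only [show p3 - 1 + 1 = p3 from by omega] at hSc
      exact ⟨b, c', hbp, hcp, hbne, hcne, sup_disjoint hpa hSb hSc (by omega)⟩

end Converse
section Characterization
variable {M : ℕ}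

lemma eq_ones_of_le1 {a : ℕ → ℕ} (hpa : IsPartition M a) (hM : 1 ≤ M)
    (h : a 0 ≤ 1) : a = ones M := by
  funext i
  unfold ones
  split_ifs with h1
  · have hub : a i ≤ 1 := le_trans (hpa.1 0 i (Nat.zero_le _)) h
    by_contra hne
    have h0 : a i = 0 := by omega
    have hst := SS_stall hpa h0
    have : SS a i ≤ i := by
      calc SS a i ≤ ∑ _j ∈ Finset.range i, 1 :=
            Finset.sum_le_sum (fun j _ => le_trans (hpa.1 0 j (Nat.zero_le _)) h)
        _ = i := by simp
    omega
  · exact hpa.2.2 i (by omega)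

/-- the full characterization of join-irreducible partitions -/
lemma JoinIrr_iff (hM : 2 ≤ M) (a : ℕ → ℕ) :
    JoinIrr M a ↔ ∃ c r s t, 1 ≤ c ∧ 1 ≤ r ∧ (c = 1 → s = 0) ∧
      (c = 2 → s = 0 ∨ t = 0) ∧ M = (c+1)*r + c*s + t ∧ a = pa c r s t := by
  constructor
  · rintro ⟨hpa, hne, hirr⟩
    have h2 : 2 ≤ a 0 := by
      by_contra h
      exact hne (eq_ones_of_le1 hpa (by omega) (by omega))
    rcases shape_or_red hpa h2 with hsh | ⟨b, c', hb, hc', hbne, hcne, hsup⟩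
    · exact hsh
    · rcases hirr b c' hb hc' hsup with h | h
      · exact absurd h.symm hbne
      · exact absurd h.symm hcne
  · rintro ⟨c, r, s, t, hc, hr, h1, h2, hMeq, rfl⟩
    exact shape_JoinIrr hc hr h1 h2 hMeq

lemma pa_le_c {c r s t i : ℕ} (hc : 1 ≤ c) (hi : r ≤ i) : pa c r s t i ≤ c := by
  unfold pa
  split_ifs <;> omega

lemma pa_le_one {c r s t i : ℕ} (hi : r + s ≤ i) : pa c r s t i ≤ 1 := by
  unfold pa
  split_ifs <;> omega

/-- injectivity of the parametrization on canonical parameters -/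
lemma pa_inj {c r s t c' r' s' t' : ℕ}
    (hc : 1 ≤ c) (hr : 1 ≤ r) (h1 : c = 1 → s = 0)
    (hc' : 1 ≤ c') (hr' : 1 ≤ r') (h1' : c' = 1 → s' = 0)
    (hM : (c+1)*r + c*s + t = (c'+1)*r' + c'*s' + t')
    (h : pa c r s t = pa c' r' s' t') :
    c = c' ∧ r = r' ∧ s = s' ∧ t = t' := by
  have hv := fun i => congrFun h i
  have hcc : c = c' := by
    have h0 := hv 0
    unfold pa at h0
    rw [if_pos (by omega : 0 < r), if_pos (by omega : 0 < r')] at h0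
    omega
  have hrr : r = r' := by
    rcases lt_trichotomy r r' with hlt | heq | hgt
    · exfalso
      have hL : pa c r s t r ≤ c := pa_le_c hc le_rfl
      have hR : pa c' r' s' t' r = c' + 1 := by unfold pa; rw [if_pos hlt]
      rw [hv r] at hL
      omega
    · exact heq
    · exfalso
      have hL : pa c' r' s' t' r' ≤ c' := pa_le_c hc' le_rfl
      have hR : pa c r s t r' = c + 1 := by unfold pa; rw [if_pos hgt]
      rw [← hv r'] at hL
      omega
  have hss : s = s' := by
    by_cases hc1 : c = 1
    · rw [h1 hc1, h1' (by omega)]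
    · rcases lt_trichotomy s s' with hlt | heq | hgt
      · exfalso
        have hL : pa c r s t (r+s) ≤ 1 := pa_le_one le_rfl
        have hR : pa c' r' s' t' (r+s) = c' := by
          unfold pa
          rw [if_neg (by omega), if_pos (by omega)]
        rw [hv (r+s)] at hL
        omega
      · exact heq
      · exfalso
        have hL : pa c' r' s' t' (r'+s') ≤ 1 := pa_le_one le_rfl
        have hR : pa c r s t (r'+s') = c := by
          unfold pa
          rw [if_neg (by omega), if_pos (by omega)]
        rw [← hv (r'+s')] at hL
        omega
  refine ⟨hcc, hrr, hss, ?_⟩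
  rw [hcc, hrr, hss] at hM
  omega

end Characterization
section Counting
variable {M : ℕ}

def KK (M : ℕ) : Finset (ℕ×ℕ×ℕ×ℕ) :=
  ((Finset.range (M+1)) ×ˢ (Finset.range (M+1)) ×ˢ (Finset.range (M+1)) ×ˢ
    (Finset.range (M+1))).filter fun x =>
    1 ≤ x.1 ∧ 1 ≤ x.2.1 ∧ (x.1 = 1 → x.2.2.1 = 0) ∧
    (x.1 = 2 → x.2.2.1 = 0 ∨ x.2.2.2 = 0) ∧
    M = (x.1+1)*x.2.1 + x.1*x.2.2.1 + x.2.2.2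

lemma mem_KK {c r s t : ℕ} (hM : 2 ≤ M) :
    (c, r, s, t) ∈ KK M ↔ 1 ≤ c ∧ 1 ≤ r ∧ (c = 1 → s = 0) ∧
      (c = 2 → s = 0 ∨ t = 0) ∧ M = (c+1)*r + c*s + t := by
  rw [KK, Finset.mem_filter]
  simp only [Finset.mem_product, Finset.mem_range]
  constructor
  · tauto
  · rintro ⟨hc, hr, h1, h2, hMeq⟩
    refine ⟨⟨?_, ?_, ?_, ?_⟩, hc, hr, h1, h2, hMeq⟩
    · have b1 : c + 1 ≤ (c+1)*r := Nat.le_mul_of_pos_right _ (by omega)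
      omega
    · have b2 : r * 1 ≤ r * (c+1) := Nat.mul_le_mul_left _ (by omega)
      have b2' : r * (c+1) = (c+1) * r := Nat.mul_comm _ _
      omega
    · have b3 : s * 1 ≤ s * c := Nat.mul_le_mul_left _ hc
      have b3' : s * c = c * s := Nat.mul_comm _ _
      omega
    · omega

lemma JI_set_eq (hM : 2 ≤ M) :
    {a : ℕ → ℕ | JoinIrr M a} =
      (fun x : ℕ×ℕ×ℕ×ℕ => pa x.1 x.2.1 x.2.2.1 x.2.2.2) '' ↑(KK M) := by
  ext a
  simp only [Set.mem_setOf_eq, JoinIrr_iff hM, Set.mem_image, Finset.mem_coe]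
  constructor
  · rintro ⟨c, r, s, t, hc, hr, h1, h2, hMeq, rfl⟩
    exact ⟨(c, r, s, t), (mem_KK hM).2 ⟨hc, hr, h1, h2, hMeq⟩, rfl⟩
  · rintro ⟨⟨c, r, s, t⟩, hmem, rfl⟩
    obtain ⟨hc, hr, h1, h2, hMeq⟩ := (mem_KK hM).1 hmem
    exact ⟨c, r, s, t, hc, hr, h1, h2, hMeq, rfl⟩

lemma ncard_JI (hM : 2 ≤ M) : Set.ncard {a : ℕ → ℕ | JoinIrr M a} = (KK M).card := by
  rw [JI_set_eq hM, Set.ncard_image_of_injOn, Set.ncard_coe_finset]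
  intro x hx y hy hxy
  rw [Finset.mem_coe] at hx hy
  obtain ⟨c, r, s, t⟩ := x
  obtain ⟨c', r', s', t'⟩ := y
  obtain ⟨hc, hr, h1, _h2, hMeq⟩ := (mem_KK hM).1 hx
  obtain ⟨hc', hr', h1', _h2', hMeq'⟩ := (mem_KK hM).1 hy
  have hpaeq : pa c r s t = pa c' r' s' t' := hxy
  obtain ⟨e1, e2, e3, e4⟩ := pa_inj hc hr h1 hc' hr' h1' (by omega) hpaeq
  rw [e1, e2, e3, e4]

def UU (M : ℕ) : Finset ((_ : ℕ) × ℕ) :=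
  (Finset.Icc 2 M).sigma fun k => (Finset.Icc 1 M).filter
    (fun u => 2*u ≤ k ∧ (k = M ∨ 2*u = k ∨ 3*u ≤ k))

lemma mem_UU {k u : ℕ} :
    (⟨k, u⟩ : (_ : ℕ) × ℕ) ∈ UU M ↔ (2 ≤ k ∧ k ≤ M) ∧ (1 ≤ u ∧ u ≤ M) ∧ 2*u ≤ k ∧
      (k = M ∨ 2*u = k ∨ 3*u ≤ k) := by
  rw [UU, Finset.mem_sigma, Finset.mem_filter, Finset.mem_Icc, Finset.mem_Icc]

lemma div_bounds {k u : ℕ} (hu : 1 ≤ u) (h2u : 2*u ≤ k) :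
    1 ≤ (k-1)/u ∧ ((k-1)/u)*u + 1 ≤ k ∧ k ≤ ((k-1)/u + 1)*u := by
  have hd := Nat.div_add_mod (k-1) u
  have hm : (k-1) % u < u := Nat.mod_lt _ (by omega)
  have hcomm : u*((k-1)/u) = ((k-1)/u)*u := Nat.mul_comm _ _
  have he : ((k-1)/u + 1)*u = ((k-1)/u)*u + u := by ring
  refine ⟨?_, by omega, by omega⟩
  by_contra h
  have hc0 : (k-1)/u = 0 := Nat.eq_zero_of_not_pos h
  rw [hc0] at hd
  simp at hd
  omega

/-- the inverse map lands in KK and inverts -/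
lemma j_mem (hM2 : 2 ≤ M) {k u : ℕ} (hk2 : 2 ≤ k) (hkM : k ≤ M) (hu1 : 1 ≤ u)
    (h2u : 2*u ≤ k) (hcond : k = M ∨ 2*u = k ∨ 3*u ≤ k) :
    (((k-1)/u, u - (((k-1)/u + 1)*u - k), ((k-1)/u + 1)*u - k, M - k) ∈ KK M) ∧
    ((k-1)/u + 1)*(u - (((k-1)/u + 1)*u - k)) + ((k-1)/u)*(((k-1)/u + 1)*u - k) = k ∧
    (u - (((k-1)/u + 1)*u - k)) + (((k-1)/u + 1)*u - k) = u := by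
  obtain ⟨hc1, hlow, hhigh⟩ := div_bounds hu1 h2u
  set c := (k-1)/u with hcdef
  have he : (c+1)*u = c*u + u := by ring
  set s := (c+1)*u - k with hsdef
  have hsu : s + k = (c+1)*u := by omega
  have hs1 : s ≤ u - 1 := by omega
  set r := u - s with hrdef
  have hrs : r + s = u := by omega
  have e1 : (c+1)*(r+s) = (c+1)*r + (c+1)*s := Nat.mul_add _ _ _
  rw [hrs] at e1
  have e2 : (c+1)*s = c*s + s := by ring
  have hk : (c+1)*r + c*s = k := by omega
  refine ⟨(mem_KK hM2).2 ⟨hc1, by omega, ?_, ?_, by omega⟩, by omega, by omega⟩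
  · intro hc1'
    have g1 : c*u = u := by rw [hc1', one_mul]
    omega
  · intro hc2
    have g1 : c*u = 2*u := by rw [hc2]
    have g2 : (c+1)*u = 3*u := by rw [hc2]
    rcases hcond with h | h | h
    · right; omega
    · omega
    · left; omega

lemma KK_card (hM : 2 ≤ M) : (KK M).card = (UU M).card := by
  apply Finset.card_bij'
    (i := fun x _ => (⟨(x.1+1)*x.2.1 + x.1*x.2.2.1, x.2.1 + x.2.2.1⟩ : (_ : ℕ) × ℕ))
    (j := fun b _ => ((b.1-1)/b.2, b.2 - (((b.1-1)/b.2 + 1)*b.2 - b.1),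
      ((b.1-1)/b.2 + 1)*b.2 - b.1, M - b.1))
  · -- hi : image in UU
    intro x hx
    obtain ⟨c, r, s, t⟩ := x
    obtain ⟨hc, hr, h1, h2, hMeq⟩ := (mem_KK hM).1 hx
    show (⟨(c+1)*r + c*s, r + s⟩ : (_ : ℕ) × ℕ) ∈ UU M
    rw [mem_UU]
    have b1 : 2*r ≤ (c+1)*r := Nat.mul_le_mul_right r (by omega)
    have b2 : 1*s ≤ c*s := Nat.mul_le_mul_right s hc
    have b3 : 2 ≤ (c+1)*r := le_trans (by omega) b1
    refine ⟨⟨by omega, by omega⟩, ⟨by omega, by omega⟩, ?_, ?_⟩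
    · rcases Nat.lt_or_ge c 2 with h | h
      · have hc1 : c = 1 := by omega
        have hs0 : s = 0 := h1 hc1
        rw [hs0]
        omega
      · have b4 : 2*s ≤ c*s := Nat.mul_le_mul_right s h
        have e : 2*(r+s) = 2*r + 2*s := by ring
        omega
    · by_cases ht : t = 0
      · left; omega
      · by_cases hs : s = 0
        · rcases Nat.lt_or_ge c 2 with h | h
          · have hc1 : c = 1 := by omega
            right; left
            rw [hs, hc1]
            omega
          · right; right
            have b5 : 3*r ≤ (c+1)*r := Nat.mul_le_mul_right r (by omega)
            rw [hs]
            omega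
        · have hc3 : 3 ≤ c := by
            by_contra h
            have hc12 : c = 1 ∨ c = 2 := by omega
            rcases hc12 with h' | h'
            · exact hs (h1 h')
            · rcases h2 h' with h'' | h''
              · exact hs h''
              · exact ht h''
          right; right
          have b5 : 3*r ≤ (c+1)*r := Nat.mul_le_mul_right r (by omega)
          have b6 : 3*s ≤ c*s := Nat.mul_le_mul_right s hc3
          have e : 3*(r+s) = 3*r + 3*s := by ring
          omega
  · -- hj : inverse lands in KK
    intro b hb
    obtain ⟨k, u⟩ := b
    obtain ⟨⟨hk2, hkM⟩, ⟨hu1, _⟩, h2u, hcond⟩ := mem_UU.1 hb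
    exact (j_mem hM hk2 hkM hu1 h2u hcond).1
  · -- left inverse
    intro x hx
    obtain ⟨c, r, s, t⟩ := x
    obtain ⟨hc, hr, _h1, _h2, hMeq⟩ := (mem_KK hM).1 hx
    show (((c+1)*r + c*s - 1)/(r+s),
        (r+s) - ((((c+1)*r + c*s - 1)/(r+s) + 1)*(r+s) - ((c+1)*r + c*s)),
        (((c+1)*r + c*s - 1)/(r+s) + 1)*(r+s) - ((c+1)*r + c*s),
        M - ((c+1)*r + c*s)) = (c, r, s, t)
    have e1 : c*(r+s) = c*r + c*s := Nat.mul_add _ _ _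
    have e2 : (c+1)*r = c*r + r := by ring
    have e3 : (c+1)*(r+s) = c*r + r + (c*s + s) := by ring
    have hdiv : ((c+1)*r + c*s - 1)/(r+s) = c := by
      apply Nat.div_eq_of_lt_le
      · omega
      · omega
    rw [hdiv]
    have g1 : (c+1)*(r+s) - ((c+1)*r + c*s) = s := by omega
    rw [g1]
    have g2 : r + s - s = r := by omega
    rw [g2]
    have g3 : M - ((c+1)*r + c*s) = t := by omega
    rw [g3]
  · -- right inverse
    intro b hb
    obtain ⟨k, u⟩ := b
    obtain ⟨⟨hk2, hkM⟩, ⟨hu1, _⟩, h2u, hcond⟩ := mem_UU.1 hb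
    obtain ⟨_, hback, hu⟩ := j_mem hM hk2 hkM hu1 h2u hcond
    show (⟨((k-1)/u + 1)*(u - (((k-1)/u + 1)*u - k)) + ((k-1)/u)*(((k-1)/u + 1)*u - k),
      (u - (((k-1)/u + 1)*u - k)) + (((k-1)/u + 1)*u - k)⟩ : (_ : ℕ) × ℕ) = ⟨k, u⟩
    rw [hback, hu]

end Counting
section Sums
variable {M : ℕ}

lemma UU_card (hM : 2 ≤ M) :
    (UU M).card = M/2 + ((∑ k ∈ Finset.Icc 2 (M-1), k/3) +
      (∑ k ∈ Finset.Icc 2 (M-1), if 2 ∣ k then 1 else 0)) := by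
  rw [UU, Finset.card_sigma]
  have hins : Finset.Icc 2 M = insert M (Finset.Icc 2 (M-1)) := by
    ext k
    simp only [Finset.mem_Icc, Finset.mem_insert]
    omega
  rw [hins, Finset.sum_insert (by simp only [Finset.mem_Icc]; omega)]
  have hMterm : ((Finset.Icc 1 M).filter
      (fun u => 2*u ≤ M ∧ (M = M ∨ 2*u = M ∨ 3*u ≤ M))).card = M/2 := by
    have he : (Finset.Icc 1 M).filter
        (fun u => 2*u ≤ M ∧ (M = M ∨ 2*u = M ∨ 3*u ≤ M)) = Finset.Icc 1 (M/2) := by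
      ext u
      simp only [Finset.mem_filter, Finset.mem_Icc, eq_self_iff_true, true_or, and_true]
      omega
    rw [he, Nat.card_Icc]
    omega
  rw [hMterm]
  have hsum : ∀ k ∈ Finset.Icc 2 (M-1),
      ((Finset.Icc 1 M).filter (fun u => 2*u ≤ k ∧ (k = M ∨ 2*u = k ∨ 3*u ≤ k))).card
      = k/3 + (if 2 ∣ k then 1 else 0) := by
    intro k hk
    rw [Finset.mem_Icc] at hk
    have hkM : k ≠ M := by omega
    by_cases h2k : 2 ∣ k
    · have he : (Finset.Icc 1 M).filter (fun u => 2*u ≤ k ∧ (k = M ∨ 2*u = k ∨ 3*u ≤ k))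
          = insert (k/2) (Finset.Icc 1 (k/3)) := by
        ext u
        simp only [Finset.mem_filter, Finset.mem_Icc, Finset.mem_insert]
        omega
      rw [he, Finset.card_insert_of_notMem (by simp only [Finset.mem_Icc]; omega),
        Nat.card_Icc, if_pos h2k]
      omega
    · have he : (Finset.Icc 1 M).filter (fun u => 2*u ≤ k ∧ (k = M ∨ 2*u = k ∨ 3*u ≤ k))
          = Finset.Icc 1 (k/3) := by
        ext u
        simp only [Finset.mem_filter, Finset.mem_Icc]
        omega
      rw [he, Nat.card_Icc, if_neg h2k]
      omega
  rw [Finset.sum_congr rfl hsum, Finset.sum_add_distrib]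

lemma sum_even : ∀ N : ℕ, (∑ k ∈ Finset.Icc 2 N, if 2 ∣ k then 1 else 0) = N/2 := by
  intro N
  induction N with
  | zero => simp
  | succ N ih =>
    rcases Nat.lt_or_ge N 1 with h | h
    · interval_cases N
      simp
    · have hins : Finset.Icc 2 (N+1) = insert (N+1) (Finset.Icc 2 N) := by
        ext k
        simp only [Finset.mem_Icc, Finset.mem_insert]
        omega
      rw [hins, Finset.sum_insert (by simp only [Finset.mem_Icc]; omega), ih]
      split_ifs with h2 <;> omega

lemma sum_div3 : ∀ N : ℕ,
    2*(∑ k ∈ Finset.Icc 2 N, k/3) + 3*(N/3)*(N/3) + N/3 = 2*N*(N/3) := by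
  intro N
  induction N with
  | zero => simp
  | succ N ih =>
    rcases Nat.lt_or_ge N 1 with h | h
    · interval_cases N
      simp
    · have hins : Finset.Icc 2 (N+1) = insert (N+1) (Finset.Icc 2 N) := by
        ext k
        simp only [Finset.mem_Icc, Finset.mem_insert]
        omega
      rw [hins, Finset.sum_insert (by simp only [Finset.mem_Icc]; omega)]
      have h3 : N % 3 = 0 ∨ N % 3 = 1 ∨ N % 3 = 2 := by omega
      rcases h3 with h3 | h3 | h3
      · have hq : (N+1)/3 = N/3 := by omega
        rw [hq]
        have e : 2*(N+1)*(N/3) = 2*N*(N/3) + 2*(N/3) := by ring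
        omega
      · have hq : (N+1)/3 = N/3 := by omega
        rw [hq]
        have e : 2*(N+1)*(N/3) = 2*N*(N/3) + 2*(N/3) := by ring
        omega
      · have hq : (N+1)/3 = N/3 + 1 := by omega
        rw [hq]
        have e1 : 3*(N/3+1)*(N/3+1) = 3*(N/3)*(N/3) + 6*(N/3) + 3 := by ring
        have e2 : 2*(N+1)*(N/3+1) = 2*N*(N/3) + 2*(N/3) + 2*N + 2 := by ring
        have e3 : N = 3*(N/3) + 2 := by omega
        omega

end Sums
/-- Closed formula: J(n+1) = n(⌊n/3⌋+1) − (3/2)⌊n/3⌋² − (1/2)⌊n/3⌋. -/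
theorem stmt14 (n : ℕ) (hn : 1 ≤ n) :
    (Set.ncard {a : ℕ → ℕ | JoinIrr (n + 1) a} : ℚ) =
      (n : ℚ) * ((n / 3 : ℕ) + 1) - 3 / 2 * ((n / 3 : ℕ) : ℚ) ^ 2
        - 1 / 2 * ((n / 3 : ℕ) : ℚ) := by
  have hM : 2 ≤ n + 1 := by omega
  have h1 := ncard_JI hM
  have h2 := KK_card hM
  have h3 := UU_card hM
  rw [show n + 1 - 1 = n from rfl] at h3
  have h4 := sum_even n
  have h5 := sum_div3 n
  have hcard : Set.ncard {a : ℕ → ℕ | JoinIrr (n + 1) a}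
      = n + (∑ k ∈ Finset.Icc 2 n, k/3) := by
    rw [h1, h2, h3, h4]
    omega
  rw [hcard]
  set G := ∑ k ∈ Finset.Icc 2 n, k/3 with hGdef
  set q : ℕ := n/3 with hqdef
  have keyQ : (2*(G:ℚ) + 3*(q:ℚ)*(q:ℚ) + (q:ℚ)) = 2*(n:ℚ)*(q:ℚ) := by
    exact_mod_cast h5
  push_cast
  have hsq : ((q:ℚ))^2 = (q:ℚ)*(q:ℚ) := sq (q:ℚ)
  rw [hsq]
  linarith [keyQ]
end
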